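/- arXiv:2012.05602 — 4 statements merged into one kernel-verified Lean document; each statement's English description precedes it below -/
import Mathlib

section
/- Let {f_n}_{n≥1} be a tight sequence of random elements of H(D) and write f_n(z) = Σ_{k=0}^∞ P_k^{(n)} z^k for the Taylor expansion at 0. Suppose there is a sequence of complex random variables {P_m}_{m≥0} such that for every m ≥ 0 the random vector (P_0^{(n)}, …, P_m^{(n)}) converges in law to (P_0, …, P_m) as n → ∞. Then f(z) = Σ_{k=0}^∞ P_k z^k is almost surely a well-defined element of H(D), and f_n converges in law to f in H(D). -/
open MeasureTheory ProbabilityTheory Filter Metric Topology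
open scoped NNReal ENNReal Uniformity

noncomputable section

/-- The space `H(D)` of holomorphic functions on the open unit disc. -/
def HolD : Type := {f : ℂ → ℂ // DifferentiableOn ℂ f (ball (0 : ℂ) 1)}

/-- Restriction of an element of `H(D)` to a continuous map on the disc. -/
def HolD.restrict (f : HolD) : C(ball (0 : ℂ) 1, ℂ) :=
  ⟨(ball (0 : ℂ) 1).restrict f.1, f.2.continuousOn.restrict⟩

/-- `H(D)` carries the compact-open topology (topology of locally uniform convergence on
compact subsets of the disc). -/
instance : TopologicalSpace HolD :=
  TopologicalSpace.induced HolD.restrict inferInstance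

instance : MeasurableSpace HolD := borel HolD
instance : BorelSpace HolD := ⟨rfl⟩

namespace HolDAux

lemma isInducing_restrict : IsInducing HolD.restrict := ⟨rfl⟩

lemma restrict_apply (g : HolD) (x : ball (0:ℂ) 1) : g.restrict x = g.1 x.1 := rfl

lemma continuous_restrict : Continuous HolD.restrict := isInducing_restrict.continuous

/-- the `k`-th Taylor coefficient at `0`. -/
def Acoef (k : ℕ) (g : HolD) : ℂ := cauchyPowerSeries g.1 0 (2⁻¹ : ℝ) k (fun _ => 1)

lemma hasFPowerSeriesOnBall (g : HolD) {r : ℝ≥0} (h0 : 0 < r) (h1 : (r : ℝ) < 1) :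
    HasFPowerSeriesOnBall g.1 (cauchyPowerSeries g.1 0 r) 0 r := by
  refine DifferentiableOn.hasFPowerSeriesOnBall (g.2.mono ?_) h0
  intro z hz
  simp only [Metric.mem_closedBall, Metric.mem_ball] at *
  linarith

lemma cauchy_radius_indep (g : HolD) {r r' : ℝ≥0} (h0 : 0 < r) (h1 : (r : ℝ) < 1)
    (h0' : 0 < r') (h1' : (r' : ℝ) < 1) :
    cauchyPowerSeries g.1 0 r = cauchyPowerSeries g.1 0 r' :=
  (hasFPowerSeriesOnBall g h0 h1).hasFPowerSeriesAt.eq_formalMultilinearSeries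
    (hasFPowerSeriesOnBall g h0' h1').hasFPowerSeriesAt

lemma Acoef_eq (g : HolD) {r : ℝ≥0} (h0 : 0 < r) (h1 : (r : ℝ) < 1) (k : ℕ) :
    Acoef k g = cauchyPowerSeries g.1 0 r k (fun _ => 1) := by
  rw [Acoef]
  have : ((2:ℝ)⁻¹ : ℝ) = ((2⁻¹ : ℝ≥0) : ℝ) := by norm_num
  rw [this, cauchy_radius_indep g (by norm_num) (by norm_num) h0 h1]

lemma continuousOn_sphere (g : HolD) {r : ℝ} (h0 : 0 ≤ r) (h1 : r < 1) :
    ContinuousOn g.1 (sphere (0:ℂ) r) := by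
  refine g.2.continuousOn.mono fun z hz => ?_
  simp only [mem_sphere_iff_norm, sub_zero] at hz
  simp [Metric.mem_ball, Complex.dist_eq, hz, h1]

lemma norm_Acoef_le (g : HolD) {r : ℝ} (h0 : 0 < r) (h1 : r < 1) {M : ℝ}
    (hM : ∀ z : ℂ, ‖z‖ = r → ‖g.1 z‖ ≤ M) (k : ℕ) :
    ‖Acoef k g‖ * r ^ k ≤ M := by
  set rn : ℝ≥0 := ⟨r, h0.le⟩ with hrn
  have hrc : (rn : ℝ) = r := rfl
  have h2 := norm_cauchyPowerSeries_le g.1 0 r k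
  have hMnn : 0 ≤ M := le_trans (norm_nonneg _) (hM r (by simp [abs_of_pos h0, h0.le]))
  have hint : (∫ θ : ℝ in (0)..2 * Real.pi, ‖g.1 (circleMap 0 r θ)‖) ≤ 2 * Real.pi * M := by
    have : ∀ θ ∈ Set.uIcc (0:ℝ) (2 * Real.pi), ‖g.1 (circleMap 0 r θ)‖ ≤ M := by
      intro θ _
      exact hM _ (by simp [circleMap, abs_of_pos h0])
    calc (∫ θ : ℝ in (0)..2 * Real.pi, ‖g.1 (circleMap 0 r θ)‖)
        ≤ ∫ _ : ℝ in (0)..2 * Real.pi, M := by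
          apply intervalIntegral.integral_mono_on Real.two_pi_pos.le
          · apply ContinuousOn.intervalIntegrable
            apply ContinuousOn.norm
            exact (continuousOn_sphere g h0.le h1).comp
              (Continuous.continuousOn (by continuity)) (fun θ _ => by
                simp [circleMap, abs_of_pos h0])
          · exact intervalIntegrable_const
          · intro θ hθ; exact hM _ (by simp [circleMap, abs_of_pos h0])
      _ = 2 * Real.pi * M := by simp [mul_comm]
  have hA : ‖Acoef k g‖ ≤ ‖cauchyPowerSeries g.1 0 r k‖ := by
    rw [Acoef_eq g (r := rn) (NNReal.coe_pos.mp h0) (by simpa [hrc] using h1) k]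
    calc ‖cauchyPowerSeries g.1 0 r k (fun _ => 1)‖
        ≤ ‖cauchyPowerSeries g.1 0 r k‖ * ∏ _i : Fin k, ‖(1:ℂ)‖ :=
          ContinuousMultilinearMap.le_opNorm _ _
      _ = ‖cauchyPowerSeries g.1 0 r k‖ := by simp
  have habs : |r| = r := abs_of_pos h0
  calc ‖Acoef k g‖ * r ^ k ≤ ‖cauchyPowerSeries g.1 0 r k‖ * r ^ k := by
        apply mul_le_mul_of_nonneg_right hA (by positivity)
    _ ≤ (((2 * Real.pi)⁻¹ * ∫ θ : ℝ in (0)..2 * Real.pi, ‖g.1 (circleMap 0 r θ)‖) * |r|⁻¹ ^ k)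
          * r ^ k := by
        apply mul_le_mul_of_nonneg_right h2 (by positivity)
    _ ≤ (((2 * Real.pi)⁻¹ * (2 * Real.pi * M)) * |r|⁻¹ ^ k) * r ^ k := by
        apply mul_le_mul_of_nonneg_right _ (by positivity)
        apply mul_le_mul_of_nonneg_right _ (by positivity)
        apply mul_le_mul_of_nonneg_left hint (by positivity)
    _ = M := by
        rw [habs]
        field_simp
        rw [div_pow, one_pow, mul_assoc, div_mul_cancel₀ _ (by positivity), mul_one]
  done

lemma hasSum_Acoef (g : HolD) {ρ : ℝ≥0} (h0 : 0 < ρ) (h1 : (ρ:ℝ) < 1) {z : ℂ}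
    (hz : ‖z‖ < ρ) : HasSum (fun k => Acoef k g * z ^ k) (g.1 z) := by
  have hb := (hasFPowerSeriesOnBall g h0 h1).hasSum
    (y := z) (by
      simp only [EMetric.mem_ball, edist_zero_right]
      rw [← ENNReal.coe_lt_coe] at *
      exact_mod_cast hz)
  simp only [zero_add] at hb
  convert hb using 2 with k
  · rfl
  rw [Acoef_eq g h0 h1 k]
  simp only [cauchyPowerSeries, ContinuousMultilinearMap.mkPiRing_apply, Fin.prod_const]
  rw [smul_eq_mul, smul_eq_mul, smul_eq_mul]
  ring

lemma isCompact_pre {S : Set ℂ} (hS : IsCompact S) (hSb : S ⊆ ball (0:ℂ) 1) :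
    IsCompact ((Subtype.val : ball (0:ℂ) 1 → ℂ) ⁻¹' S) := by
  have : (Subtype.val : ball (0:ℂ) 1 → ℂ) ⁻¹' S
      = (fun z : S => (⟨z.1, hSb z.2⟩ : ball (0:ℂ) 1)) '' Set.univ := by
    ext x
    constructor
    · intro hx; exact ⟨⟨x.1, hx⟩, trivial, rfl⟩
    · rintro ⟨z, -, rfl⟩; exact z.2
  rw [this]
  have : CompactSpace S := isCompact_iff_compactSpace.mp hS
  exact (isCompact_univ).image (by continuity)

lemma mem_nhds_holD (g0 : HolD) {S : Set ℂ} (hS : IsCompact S) (hSb : S ⊆ ball (0:ℂ) 1)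
    {δ : ℝ} (hδ : 0 < δ) :
    {g : HolD | ∀ z ∈ S, dist (g.1 z) (g0.1 z) < δ} ∈ 𝓝 g0 := by
  have hS' := isCompact_pre hS hSb
  have htu : TendstoUniformlyOn (fun (u : C(ball (0:ℂ) 1, ℂ)) x => u x) (g0.restrict)
      (𝓝 g0.restrict) ((Subtype.val : ball (0:ℂ) 1 → ℂ) ⁻¹' S) :=
    ContinuousMap.tendsto_iff_forall_isCompact_tendstoUniformlyOn.mp tendsto_id _ hS'
  have hmem := (Metric.tendstoUniformlyOn_iff.mp htu δ hδ)
  have : 𝓝 g0 = Filter.comap HolD.restrict (𝓝 g0.restrict) := nhds_induced _ _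
  rw [this]
  refine Filter.mem_of_superset (Filter.preimage_mem_comap hmem) ?_
  intro g hg z hz
  have := hg ⟨z, hSb hz⟩ hz
  rw [dist_comm]
  exact this

lemma continuous_Acoef (k : ℕ) : Continuous (Acoef k) := by
  rw [continuous_iff_continuousAt]
  intro g0
  rw [ContinuousAt, Metric.tendsto_nhds]
  intro ε hε
  set δ : ℝ := ε / (2 ^ k + 1) with hδdef
  have hδ : 0 < δ := by positivity
  have hsub : sphere (0:ℂ) 2⁻¹ ⊆ ball (0:ℂ) 1 := fun z hz => by
    simp only [mem_sphere_iff_norm, sub_zero] at hz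
    simp [Metric.mem_ball, Complex.dist_eq, hz]; norm_num
  filter_upwards [mem_nhds_holD g0 (isCompact_sphere _ _) hsub hδ] with g hg
  have hint : ∀ (h : HolD), CircleIntegrable
      (fun z => ((1:ℂ) / (z - 0)) ^ k • (z - 0)⁻¹ • h.1 z) 0 2⁻¹ := by
    intro h
    apply ContinuousOn.circleIntegrable (by norm_num)
    have hz0 : ∀ z ∈ sphere (0:ℂ) 2⁻¹, z - 0 ≠ 0 := by
      intro z hz h0
      rw [sub_zero] at h0
      simp only [mem_sphere_iff_norm, sub_zero, h0] at hz
      norm_num at hz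
    apply ContinuousOn.fun_smul
    · exact ContinuousOn.pow (ContinuousOn.div continuousOn_const (by fun_prop) hz0) k
    apply ContinuousOn.fun_smul
    · exact ContinuousOn.inv₀ (by fun_prop) hz0
    · exact (continuousOn_sphere h (r := 2⁻¹) (by norm_num) (by norm_num))
  have hA : ∀ h : HolD, Acoef k h = (2 * Real.pi * Complex.I : ℂ)⁻¹ •
      ∮ z in C(0, (2:ℝ)⁻¹), ((1:ℂ) / (z - 0)) ^ k • (z - 0)⁻¹ • h.1 z := by
    intro h
    rw [Acoef]
    exact cauchyPowerSeries_apply h.1 0 2⁻¹ k 1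
  have hdiff : Acoef k g - Acoef k g0 = (2 * Real.pi * Complex.I : ℂ)⁻¹ •
      ∮ z in C(0, (2:ℝ)⁻¹), (((1:ℂ) / (z - 0)) ^ k • (z - 0)⁻¹ • g.1 z
        - ((1:ℂ) / (z - 0)) ^ k • (z - 0)⁻¹ • g0.1 z) := by
    rw [hA g, hA g0, circleIntegral.integral_sub (hint g) (hint g0), smul_sub]
  have hbound : ‖Acoef k g - Acoef k g0‖ ≤ 2 ^ k * δ := by
    rw [hdiff, norm_smul]
    have h2 : ‖∮ z in C(0, (2:ℝ)⁻¹), (((1:ℂ) / (z - 0)) ^ k • (z - 0)⁻¹ • g.1 z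
        - ((1:ℂ) / (z - 0)) ^ k • (z - 0)⁻¹ • g0.1 z)‖
        ≤ 2 * Real.pi * 2⁻¹ * (2 ^ (k+1) * δ) := by
      apply circleIntegral.norm_integral_le_of_norm_le_const (by norm_num)
      intro z hz
      have hz' : ‖z‖ = 2⁻¹ := by
        simpa [mem_sphere_iff_norm] using hz
      have hgz := hg z (by simpa [mem_sphere_iff_norm] using hz')
      rw [Complex.dist_eq] at hgz
      rw [← smul_sub, ← smul_sub, norm_smul, norm_smul, norm_pow, norm_div,
        norm_inv, sub_zero, hz']
      calc (‖(1:ℂ)‖ / 2⁻¹) ^ k * ((2⁻¹:ℝ)⁻¹ * ‖g.1 z - g0.1 z‖)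
          ≤ 2 ^ k * (2 * δ) := by
            rw [show (‖(1:ℂ)‖ / 2⁻¹ : ℝ) = 2 by norm_num, show ((2:ℝ)⁻¹)⁻¹ = 2 by norm_num]
            apply mul_le_mul_of_nonneg_left _ (by positivity)
            exact mul_le_mul_of_nonneg_left hgz.le (by norm_num)
        _ = 2 ^ (k+1) * δ := by ring
    have h1 : ‖((2 * Real.pi * Complex.I : ℂ))⁻¹‖ = (2 * Real.pi)⁻¹ := by
      rw [norm_inv]
      congr 1
      simp [norm_mul, abs_of_pos Real.pi_pos]
    calc ‖((2 * Real.pi * Complex.I : ℂ))⁻¹‖ *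
          ‖∮ z in C(0, (2:ℝ)⁻¹), (((1:ℂ) / (z - 0)) ^ k • (z - 0)⁻¹ • g.1 z
            - ((1:ℂ) / (z - 0)) ^ k • (z - 0)⁻¹ • g0.1 z)‖
        ≤ (2 * Real.pi)⁻¹ * (2 * Real.pi * 2⁻¹ * (2 ^ (k+1) * δ)) := by
          rw [h1]
          apply mul_le_mul_of_nonneg_left h2 (by positivity)
      _ = 2 ^ k * δ := by
          have hpi : (2:ℝ) * Real.pi ≠ 0 := by positivity
          field_simp
          ring
  rw [dist_eq_norm]
  calc ‖Acoef k g - Acoef k g0‖ ≤ 2 ^ k * δ := hbound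
    _ < ε := by
      rw [hδdef, div_eq_mul_inv, ← mul_assoc, mul_inv_lt_iff₀ (by positivity)]
      nlinarith [hε, pow_pos (show (0:ℝ) < 2 by norm_num) k]
/-- truncated Taylor polynomial as an element of `HolD`. -/
def trunc (m : ℕ) (a : Fin (m+1) → ℂ) : HolD :=
  ⟨fun z => ∑ i : Fin (m+1), a i * z ^ (i : ℕ),
    (Differentiable.differentiableOn (by
      apply Differentiable.fun_sum
      intro i _
      exact (differentiable_pow (i:ℕ)).const_mul _))⟩

lemma trunc_apply' (m : ℕ) (a : ℕ → ℂ) (z : ℂ) :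
    (trunc m (fun i => a i)).1 z = ∑ i ∈ Finset.range (m+1), a i * z ^ i := by
  show (∑ i : Fin (m+1), a (i:ℕ) * z ^ (i:ℕ)) = _
  rw [Fin.sum_univ_eq_sum_range (fun i => a i * z ^ i) (m+1)]

lemma continuous_trunc (m : ℕ) : Continuous (trunc m) := by
  rw [show (instTopologicalSpaceHolD) = TopologicalSpace.induced HolD.restrict inferInstance from rfl]
  apply continuous_induced_rng.mpr
  have : (HolD.restrict ∘ trunc m) = fun a =>
      ((ContinuousMap.mk (fun p : (Fin (m+1) → ℂ) × (ball (0:ℂ) 1) =>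
        ∑ i : Fin (m+1), p.1 i * (p.2 : ℂ) ^ (i : ℕ)) (by
          apply continuous_finset_sum
          intro i _
          exact ((continuous_apply i).comp continuous_fst).mul
            ((continuous_subtype_val.comp continuous_snd).pow _))).curry a) := by
    funext a
    ext x
    rfl
  rw [this]
  exact (ContinuousMap.curry _).continuous

lemma exists_bound {K : Set HolD} (hK : IsCompact K) {r : ℝ} (h0 : 0 ≤ r) (h1 : r < 1) :
    ∃ M : ℝ, 0 ≤ M ∧ ∀ g ∈ K, ∀ z : ℂ, ‖z‖ ≤ r → ‖g.1 z‖ ≤ M := by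
  have hsub : closedBall (0:ℂ) r ⊆ ball (0:ℂ) 1 := fun z hz => by
    simp only [Metric.mem_closedBall, Complex.dist_eq, sub_zero] at hz
    simp only [Metric.mem_ball, Complex.dist_eq, sub_zero]
    linarith
  have hS' : IsCompact ((Subtype.val : ball (0:ℂ) 1 → ℂ) ⁻¹' closedBall 0 r) :=
    isCompact_pre (isCompact_closedBall _ _) hsub
  haveI : LocallyCompactSpace (ball (0:ℂ) 1) := isOpen_ball.locallyCompactSpace
  have hev : Continuous fun p : HolD × (ball (0:ℂ) 1) => ‖p.1.restrict p.2‖ := by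
    apply Continuous.norm
    exact continuous_eval.comp (continuous_restrict.prodMap continuous_id)
  have hcomp : IsCompact ((fun p : HolD × (ball (0:ℂ) 1) => ‖p.1.restrict p.2‖) ''
      (K ×ˢ ((Subtype.val : ball (0:ℂ) 1 → ℂ) ⁻¹' closedBall 0 r))) :=
    (hK.prod hS').image hev
  obtain ⟨M', hM'⟩ := hcomp.bddAbove
  refine ⟨max M' 0, le_max_right _ _, fun g hg z hz => ?_⟩
  have hzb : z ∈ ball (0:ℂ) 1 := hsub (by simpa [Metric.mem_closedBall, Complex.dist_eq] using hz)
  have hz2 : (⟨z, hzb⟩ : ball (0:ℂ) 1) ∈ (Subtype.val : ball (0:ℂ) 1 → ℂ) ⁻¹' closedBall 0 r := by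
    simp only [Set.mem_preimage, Metric.mem_closedBall, Complex.dist_eq, sub_zero]
    exact hz
  have := hM' (Set.mem_image_of_mem (fun p : HolD × (ball (0:ℂ) 1) => ‖p.1.restrict p.2‖)
    (Set.mk_mem_prod hg hz2))
  exact le_trans this (le_max_left _ _)

lemma summable_of_bound {a : ℕ → ℂ} {C ρ : ℝ} (hρ : 0 < ρ) (hb : ∀ k, ‖a k‖ * ρ ^ k ≤ C)
    {z : ℂ} (hz : ‖z‖ < ρ) : Summable (fun k => a k * z ^ k) := by
  apply Summable.of_norm
  have hg : Summable (fun k : ℕ => C * (‖z‖ / ρ) ^ k) := by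
    apply Summable.mul_left
    apply summable_geometric_of_lt_one (by positivity)
    rw [div_lt_one hρ]
    exact hz
  have hle : ∀ k : ℕ, ‖a k * z ^ k‖ ≤ C * (‖z‖ / ρ) ^ k := by
    intro k
    rw [norm_mul, norm_pow]
    have he : ‖a k‖ * ‖z‖ ^ k = (‖a k‖ * ρ ^ k) * (‖z‖ / ρ) ^ k := by
      have hρk : (ρ:ℝ) ^ k ≠ 0 := by positivity
      field_simp
      rw [div_pow]
      field_simp
    rw [he]
    exact mul_le_mul_of_nonneg_right (hb k) (by positivity)
  exact Summable.of_nonneg_of_le (fun k => norm_nonneg _) hle hg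

lemma tail_small {C ρ r : ℝ} (hρ : 0 < ρ) (hr : 0 ≤ r) (hrρ : r < ρ) {δ : ℝ} (hδ : 0 < δ) :
    ∃ m₀ : ℕ, ∀ m ≥ m₀, ∀ a : ℕ → ℂ, (∀ k, ‖a k‖ * ρ ^ k ≤ C) → ∀ z : ℂ, ‖z‖ ≤ r →
      ‖(∑' k, a k * z ^ k) - ∑ i ∈ Finset.range (m+1), a i * z ^ i‖ < δ := by
  set q : ℝ := r / ρ with hq
  have hq0 : 0 ≤ q := by positivity
  have hq1 : q < 1 := by rw [hq, div_lt_one hρ]; exact hrρ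
  by_cases hC : 0 ≤ C
  swap
  · refine ⟨0, fun m _ a ha z hz => ?_⟩
    have h0 := ha 0
    simp only [pow_zero, mul_one] at h0
    exact absurd (le_trans (norm_nonneg _) h0) hC
  have htend : Tendsto (fun m : ℕ => C * q ^ (m+1) / (1 - q)) atTop (𝓝 0) := by
    have : Tendsto (fun m : ℕ => q ^ (m+1)) atTop (𝓝 0) :=
      (tendsto_pow_atTop_nhds_zero_of_lt_one hq0 hq1).comp (tendsto_add_atTop_nat 1)
    simpa using ((this.const_mul C).div_const (1 - q))
  obtain ⟨m₀, hm₀⟩ := (Filter.eventually_atTop.mp (htend.eventually (gt_mem_nhds hδ)))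
  refine ⟨m₀, fun m hm a ha z hz => ?_⟩
  have hzρ : ‖z‖ < ρ := lt_of_le_of_lt hz hrρ
  have hsum := summable_of_bound hρ ha hzρ
  have hterm : ∀ k, ‖a k * z ^ k‖ ≤ C * q ^ k := by
    intro k
    rw [norm_mul, norm_pow]
    calc ‖a k‖ * ‖z‖ ^ k ≤ ‖a k‖ * r ^ k :=
        mul_le_mul_of_nonneg_left (pow_le_pow_left₀ (norm_nonneg z) hz k) (norm_nonneg _)
      _ = (‖a k‖ * ρ ^ k) * q ^ k := by
          have hρk : (ρ:ℝ) ^ k ≠ 0 := by positivity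
          rw [hq, div_pow]
          field_simp
      _ ≤ C * q ^ k := mul_le_mul_of_nonneg_right (ha k) (by positivity)
  have heq : (∑' k, a k * z ^ k) - ∑ i ∈ Finset.range (m+1), a i * z ^ i
      = ∑' k, a (k + (m+1)) * z ^ (k + (m+1)) := by
    have h3 := Summable.sum_add_tsum_nat_add (f := fun k => a k * z ^ k) (m+1) hsum
    rw [← h3, add_sub_cancel_left]
  rw [heq]
  have hsum2 : Summable fun k => ‖a (k + (m+1)) * z ^ (k + (m+1))‖ := by
    apply Summable.of_nonneg_of_le (fun k => norm_nonneg _) (fun k => hterm (k + (m+1)))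
    exact ((summable_geometric_of_lt_one hq0 hq1).mul_left C).comp_injective
      (add_left_injective (m+1))
  calc ‖∑' k, a (k + (m+1)) * z ^ (k + (m+1))‖
      ≤ ∑' k, ‖a (k + (m+1)) * z ^ (k + (m+1))‖ := norm_tsum_le_tsum_norm hsum2
    _ ≤ ∑' k : ℕ, (C * q ^ (m+1)) * q ^ k := by
        apply Summable.tsum_le_tsum _ hsum2 (((summable_geometric_of_lt_one hq0 hq1).mul_left _))
        intro k
        calc ‖a (k + (m+1)) * z ^ (k + (m+1))‖ ≤ C * q ^ (k + (m+1)) := hterm _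
          _ = (C * q ^ (m+1)) * q ^ k := by rw [pow_add]; ring
    _ = (C * q ^ (m+1)) * (1 - q)⁻¹ := by
        rw [tsum_mul_left, tsum_geometric_of_lt_one hq0 hq1]
    _ = C * q ^ (m+1) / (1 - q) := by rw [div_eq_mul_inv]
    _ < δ := hm₀ m hm

lemma repr_tsum (g : HolD) {z : ℂ} (hz : ‖z‖ < 1) :
    g.1 z = (∑' k, Acoef k g * z ^ k) ∧ Summable (fun k => Acoef k g * z ^ k) := by
  have hzpos : (0:ℝ) ≤ ‖z‖ := norm_nonneg _
  set ρ : ℝ≥0 := ⟨(1 + ‖z‖)/2, by positivity⟩ with hρdef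
  have hρc : (ρ : ℝ) = (1 + ‖z‖)/2 := rfl
  have h0 : 0 < ρ := by rw [← NNReal.coe_lt_coe, hρc]; push_cast; positivity
  have h1 : (ρ : ℝ) < 1 := by rw [hρc]; linarith
  have hz' : ‖z‖ < (ρ : ℝ) := by rw [hρc]; linarith
  have hs := hasSum_Acoef g h0 h1 hz'
  exact ⟨hs.tsum_eq.symm, hs.summable⟩

/-- The compatible uniform structure on `HolD`. -/
def uHolD : UniformSpace HolD :=
  (UniformSpace.comap HolD.restrict inferInstance).replaceTopology (by
    rw [UniformSpace.toTopologicalSpace_comap]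
    rfl)

lemma uHolD_uniformity :
    @uniformity HolD uHolD =
      Filter.comap (fun p : HolD × HolD => (p.1.restrict, p.2.restrict))
        (uniformity C(ball (0:ℂ) 1, ℂ)) := rfl

/-- Uniform approximation of `φ` by its composition with Taylor truncation, on a compact set. -/
lemma unif_approx (φ : BoundedContinuousFunction HolD ℝ) {K : Set HolD} (hK : IsCompact K)
    {ε : ℝ} (hε : 0 < ε) :
    ∃ m₀ : ℕ, ∀ m ≥ m₀, ∀ g ∈ K,
      |φ g - φ (trunc m (fun i => Acoef (i : ℕ) g))| ≤ ε := by
  letI : UniformSpace HolD := uHolD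
  have hV : {p : ℝ × ℝ | dist p.1 p.2 < ε} ∈ 𝓤 ℝ := dist_mem_uniformity hε
  have hU := hK.uniformContinuousAt_of_continuousAt φ
    (fun a _ => φ.continuous.continuousAt) hV
  rw [uHolD_uniformity, Filter.mem_comap] at hU
  obtain ⟨W, hW, hWsub⟩ := hU
  rw [ContinuousMap.hasBasis_compactConvergenceUniformity.mem_iff] at hW
  obtain ⟨⟨S, V⟩, ⟨hScomp, hVmem⟩, hSV⟩ := hW
  obtain ⟨δ, hδ, hδV⟩ := mem_uniformity_dist.mp hVmem
  -- get a radius `r < 1` containing the compact set `S` of the disc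
  have hSim : IsCompact (Subtype.val '' S : Set ℂ) := hScomp.image continuous_subtype_val
  have hrex : ∃ r : ℝ, 0 ≤ r ∧ r < 1 ∧ ∀ x ∈ S, ‖(x : ℂ)‖ ≤ r := by
    rcases S.eq_empty_or_nonempty with rfl | hSne
    · exact ⟨0, le_refl _, by norm_num, by simp⟩
    · obtain ⟨z0, hz0S, hz0⟩ := hSim.exists_isMaxOn (hSne.image _)
        (continuous_norm.continuousOn)
      obtain ⟨x0, hx0S, hx0⟩ := hz0S
      refine ⟨‖z0‖, norm_nonneg _, ?_, ?_⟩
      · have h2 := x0.2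
        simp only [Metric.mem_ball, Complex.dist_eq, sub_zero] at h2
        rw [← hx0]
        simpa using h2
      · intro x hx
        exact hz0 ⟨x, hx, rfl⟩
  obtain ⟨r, hr0, hr1, hrS⟩ := hrex
  set ρ : ℝ := (1 + r)/2 with hρdef
  have hρ0 : 0 < ρ := by rw [hρdef]; linarith
  have hρ1 : ρ < 1 := by rw [hρdef]; linarith
  have hrρ : r < ρ := by rw [hρdef]; linarith
  obtain ⟨M, hM0, hM⟩ := exists_bound hK (le_trans hr0 hrρ.le) hρ1
  have hcoefb : ∀ g ∈ K, ∀ k, ‖Acoef k g‖ * ρ ^ k ≤ M := by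
    intro g hg k
    exact norm_Acoef_le g hρ0 hρ1 (fun z hz => hM g hg z (le_of_eq hz)) k
  obtain ⟨m₀, hm₀⟩ := tail_small (C := M) hρ0 hr0 hrρ hδ
  refine ⟨m₀, fun m hm g hg => ?_⟩
  have hpair : (g, trunc m (fun i => Acoef (i : ℕ) g)) ∈
      {x : HolD × HolD | x.1 ∈ K → (φ x.1, φ x.2) ∈ {p : ℝ × ℝ | dist p.1 p.2 < ε}} := by
    apply hWsub
    rw [Set.mem_preimage]
    apply hSV
    intro x hx
    apply hδV
    have hxz : ‖(x : ℂ)‖ ≤ r := hrS x hx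
    have hx1 : ‖(x : ℂ)‖ < 1 := lt_of_le_of_lt hxz (lt_of_lt_of_le hrρ hρ1.le)
    show dist (g.restrict x) ((trunc m fun i => Acoef (i : ℕ) g).restrict x) < δ
    rw [restrict_apply, restrict_apply, trunc_apply' m (fun i => Acoef i g) x,
      (repr_tsum g hx1).1, dist_eq_norm]
    exact hm₀ m hm _ (hcoefb g hg) _ hxz
  have := hpair hg
  rw [Set.mem_setOf_eq, Real.dist_eq] at this
  exact this.le

/-- Coefficient bounds at every radius `< 1` give a holomorphic sum on the disc. -/
lemma holo_of_bounds {a : ℕ → ℂ}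
    (h : ∀ ρ : ℝ, 0 < ρ → ρ < 1 → ∃ C, 0 ≤ C ∧ ∀ k, ‖a k‖ * ρ ^ k ≤ C) :
    DifferentiableOn ℂ (fun z => ∑' k, a k * z ^ k) (ball (0:ℂ) 1) := by
  intro z₀ hz₀'
  have hz₀ : ‖z₀‖ < 1 := by
    simp only [Metric.mem_ball, Complex.dist_eq, sub_zero] at hz₀'
    exact hz₀' 
  set ρ : ℝ≥0 := ⟨(1 + ‖z₀‖)/2, by positivity⟩ with hρdef
  have hρc : (ρ : ℝ) = (1 + ‖z₀‖)/2 := rfl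
  have h0 : (0:ℝ) < ρ := by rw [hρc]; positivity
  have h1 : (ρ : ℝ) < 1 := by rw [hρc]; linarith
  have hz' : ‖z₀‖ < (ρ : ℝ) := by rw [hρc]; linarith
  obtain ⟨C, hC0, hC⟩ := h ρ h0 h1
  set p : FormalMultilinearSeries ℂ ℂ ℂ :=
    fun k => ContinuousMultilinearMap.mkPiRing ℂ (Fin k) (a k) with hpdef
  have hpnorm : ∀ k, ‖p k‖ = ‖a k‖ := fun k => ContinuousMultilinearMap.norm_mkPiRing _
  have hrad : (ρ : ℝ≥0∞) ≤ p.radius := by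
    apply p.le_radius_of_bound C
    intro n
    rw [hpnorm]
    exact hC n
  have hball : HasFPowerSeriesOnBall (fun z => ∑' k, a k * z ^ k) p 0 ρ := by
    refine ⟨hrad, by exact_mod_cast h0, ?_⟩
    intro y hy
    simp only [EMetric.mem_ball, edist_zero_right] at hy
    have hy' : ‖y‖ < (ρ : ℝ) := by exact_mod_cast hy
    have hsum := summable_of_bound h0 hC hy'
    have : ∀ k, (p k fun _ => y) = a k * y ^ k := by
      intro k
      simp only [hpdef, ContinuousMultilinearMap.mkPiRing_apply, Fin.prod_const, smul_eq_mul]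
      ring
    rw [show (fun k => p k fun _ => y) = fun k => a k * y ^ k from funext this, zero_add]
    exact hsum.hasSum
  have hd := hball.differentiableOn
  have hmem : z₀ ∈ Metric.eball (0:ℂ) ρ := by
    simp only [EMetric.mem_ball, edist_zero_right]
    exact_mod_cast hz'
  exact ((hd z₀ hmem).differentiableAt (Metric.isOpen_eball.mem_nhds hmem)).differentiableWithinAt

lemma trunc_zero_eq (m : ℕ) : trunc m (fun _ => (0:ℂ)) = ⟨0, differentiableOn_const 0⟩ := by
  apply Subtype.ext
  funext z
  show (∑ _i : Fin (m+1), (0:ℂ) * z ^ _) = 0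
  simp

/-- Taylor truncations converge to the function in `HolD`. -/
lemma tendsto_trunc {a : ℕ → ℂ}
    (h : ∀ ρ : ℝ, 0 < ρ → ρ < 1 → ∃ C, 0 ≤ C ∧ ∀ k, ‖a k‖ * ρ ^ k ≤ C)
    {g : HolD} (hg : ∀ z : ℂ, ‖z‖ < 1 → g.1 z = ∑' k, a k * z ^ k) :
    Tendsto (fun m => trunc m (fun i => a (i : ℕ))) atTop (𝓝 g) := by
  rw [isInducing_restrict.tendsto_nhds_iff]
  rw [ContinuousMap.tendsto_iff_forall_isCompact_tendstoUniformlyOn]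
  intro S hS
  rw [Metric.tendstoUniformlyOn_iff]
  intro δ hδ
  -- find r < 1 with S inside the closed ball of radius r
  have hSim : IsCompact (Subtype.val '' S : Set ℂ) := hS.image continuous_subtype_val
  have hrex : ∃ r : ℝ, 0 ≤ r ∧ r < 1 ∧ ∀ x ∈ S, ‖(x : ℂ)‖ ≤ r := by
    rcases S.eq_empty_or_nonempty with rfl | hSne
    · exact ⟨0, le_refl _, by norm_num, by simp⟩
    · obtain ⟨z0, hz0S, hz0⟩ := hSim.exists_isMaxOn (hSne.image _)
        (continuous_norm.continuousOn)
      obtain ⟨x0, hx0S, hx0⟩ := hz0S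
      refine ⟨‖z0‖, norm_nonneg _, ?_, fun x hx => hz0 ⟨x, hx, rfl⟩⟩
      have h2 := x0.2
      simp only [Metric.mem_ball, Complex.dist_eq, sub_zero] at h2
      rw [← hx0]
      simpa using h2
  obtain ⟨r, hr0, hr1, hrS⟩ := hrex
  set ρ : ℝ := (1 + r)/2 with hρdef
  have hρ0 : 0 < ρ := by rw [hρdef]; linarith
  have hρ1 : ρ < 1 := by rw [hρdef]; linarith
  have hrρ : r < ρ := by rw [hρdef]; linarith
  obtain ⟨C, hC0, hC⟩ := h ρ hρ0 hρ1
  obtain ⟨m₀, hm₀⟩ := tail_small (C := C) hρ0 hr0 hrρ hδ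
  rw [Filter.eventually_atTop]
  refine ⟨m₀, fun m hm x hx => ?_⟩
  have hx1 : ‖(x:ℂ)‖ < 1 := lt_of_le_of_lt (hrS x hx) (lt_of_lt_of_le hrρ hρ1.le)
  show dist (g.restrict x) ((trunc m fun i => a (i:ℕ)).restrict x) < δ
  rw [restrict_apply, restrict_apply, trunc_apply' m a x, hg _ hx1, dist_eq_norm]
  exact hm₀ m hm a hC _ (hrS x hx)

lemma exists_closed_compact {K : Set HolD} (hK : IsCompact K) :
    ∃ K' : Set HolD, IsCompact K' ∧ IsClosed K' ∧ K ⊆ K' := by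
  refine ⟨HolD.restrict ⁻¹' (HolD.restrict '' K), ?_, ?_, Set.subset_preimage_image _ _⟩
  · rw [isCompact_iff_finite_subcover]
    intro ι U hU hcov
    obtain ⟨t, ht⟩ := hK.elim_finite_subcover U hU
      ((Set.subset_preimage_image _ _).trans hcov)
    refine ⟨t, fun x hx => ?_⟩
    obtain ⟨y, hyK, hyx⟩ := hx
    have := ht hyK
    rw [Set.mem_iUnion₂] at this
    obtain ⟨i, hit, hyU⟩ := this
    obtain ⟨V, hVopen, hVeq⟩ := isInducing_restrict.isOpen_iff.mp (hU i)
    rw [Set.mem_iUnion₂]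
    refine ⟨i, hit, ?_⟩
    rw [← hVeq] at hyU ⊢
    rw [Set.mem_preimage] at hyU ⊢
    rwa [← hyx]
  · exact ((hK.image continuous_restrict).isClosed).preimage continuous_restrict

/-- sequence of radii increasing to 1 -/
def rseq (i : ℕ) : ℝ := (i+1)/(i+2)

lemma rseq_pos (i : ℕ) : 0 < rseq i := by rw [rseq]; positivity

lemma rseq_lt_one (i : ℕ) : rseq i < 1 := by
  rw [rseq, div_lt_one (by positivity)]
  linarith

lemma exists_rseq_gt {x : ℝ} (hx : x < 1) : ∃ i, x < rseq i := by
  obtain ⟨n, hn⟩ := exists_nat_one_div_lt (show (0:ℝ) < 1 - x by linarith)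
  refine ⟨n, ?_⟩
  have h2 : (1:ℝ) - rseq n = 1/(n+2) := by
    rw [rseq]
    field_simp
    norm_num
  have h3 : (1:ℝ)/(n+2) ≤ 1/(n+1) := by
    apply div_le_div_of_nonneg_left (by norm_num) (by positivity)
    norm_num
  nlinarith [hn, h2, h3]

end HolDAux

open HolDAux

/-- **Reduction to convergence of coefficients** (Lemma 3.2): if `{fₙ}` is a tight sequence of
random elements of `H(D)` whose Taylor coefficients at `0` converge jointly in law to a fixed
sequence of random variables `{Q_m}`, then `f = ∑ Q_k z^k` is a.s. a well-defined element of
`H(D)` and `fₙ → f` in law in `H(D)`. -/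
theorem tight_coefficient_convergence
    {Ω Ω' : Type*} [MeasurableSpace Ω] [MeasurableSpace Ω']
    (P : Measure Ω) [IsProbabilityMeasure P] (P' : Measure Ω') [IsProbabilityMeasure P']
    (f : ℕ → Ω → HolD)
    (hfmeas : ∀ n, Measurable (f n))
    -- tightness of `{fₙ}`
    (htight : ∀ ε : ℝ, 0 < ε → ∃ K : Set HolD, IsCompact K ∧
      ∀ n : ℕ, 1 ≤ n → 1 - ENNReal.ofReal ε < P {ω : Ω | f n ω ∈ K})
    -- `c n k ω` is the `k`-th Taylor coefficient at `0` of `fₙ(ω)`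
    (c : ℕ → ℕ → Ω → ℂ)
    (hcoeff : ∀ n : ℕ, ∀ ω : Ω, ∀ z ∈ ball (0 : ℂ) 1,
      (Summable fun k : ℕ => c n k ω * z ^ k) ∧ (f n ω).1 z = ∑' k : ℕ, c n k ω * z ^ k)
    -- the limiting coefficients `{Q_m}` and the joint convergence in law
    (Q : ℕ → Ω' → ℂ)
    (hQmeas : ∀ k, Measurable (Q k))
    (hconv : ∀ m : ℕ, ∀ φ : BoundedContinuousFunction (Fin (m + 1) → ℂ) ℝ,
      Tendsto (fun n : ℕ => ∫ ω, φ (fun i : Fin (m + 1) => c n i.1 ω) ∂P) atTop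
        (nhds (∫ ω, φ (fun i : Fin (m + 1) => Q i.1 ω) ∂P'))) :
    ∃ G : Ω' → HolD,
      (∀ᵐ ω ∂P', ∀ z ∈ ball (0 : ℂ) 1,
        (Summable fun k : ℕ => Q k ω * z ^ k) ∧ (G ω).1 z = ∑' k : ℕ, Q k ω * z ^ k) ∧
      ∀ φ : BoundedContinuousFunction HolD ℝ,
        Tendsto (fun n : ℕ => ∫ ω, φ (f n ω) ∂P) atTop (nhds (∫ ω, φ (G ω) ∂P')) := by
  classical
  -- Step 1: the given coefficients agree with the canonical ones
  have hc : ∀ n ω k, c n k ω = Acoef k (f n ω) := by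
    intro n ω k
    set g : HolD := f n ω with hgdef
    set q : FormalMultilinearSeries ℂ ℂ ℂ :=
      fun k => ContinuousMultilinearMap.mkPiRing ℂ (Fin k) (c n k ω) with hqdef
    have hz34 : ((3/4 : ℝ) : ℂ) ∈ ball (0:ℂ) 1 := by
      simp only [Metric.mem_ball, Complex.dist_eq, sub_zero]
      rw [show ‖((3/4 : ℝ) : ℂ)‖ = |(3/4 : ℝ)| from (Complex.norm_real _).trans (Real.norm_eq_abs _)]
      rw [abs_of_pos (by norm_num : (0:ℝ) < 3/4)]
      norm_num
    have hsum34 := (hcoeff n ω _ hz34).1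
    have hbdd : ∃ C : ℝ, ∀ j : ℕ, ‖c n j ω‖ * (3/4 : ℝ) ^ j ≤ C := by
      have ht := hsum34.tendsto_atTop_zero.norm
      obtain ⟨C, hC⟩ := ht.bddAbove_range
      refine ⟨C, fun j => ?_⟩
      have : ‖c n j ω * ((3/4 : ℝ) : ℂ) ^ j‖ ≤ C := hC ⟨j, rfl⟩
      rw [norm_mul, norm_pow, show ‖((3/4 : ℝ) : ℂ)‖ = (3/4 : ℝ) by
        rw [Complex.norm_real]; norm_num] at this
      exact this
    obtain ⟨C, hC⟩ := hbdd
    have hrad : ((2⁻¹ : ℝ≥0) : ℝ≥0∞) ≤ q.radius := by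
      apply q.le_radius_of_bound C
      intro j
      have h1 : ‖q j‖ = ‖c n j ω‖ := ContinuousMultilinearMap.norm_mkPiRing _
      rw [h1]
      calc ‖c n j ω‖ * ((2⁻¹ : ℝ≥0) : ℝ) ^ j ≤ ‖c n j ω‖ * (3/4 : ℝ) ^ j := by
            apply mul_le_mul_of_nonneg_left _ (norm_nonneg _)
            apply pow_le_pow_left₀ (by norm_num)
            norm_num
        _ ≤ C := hC j
    have hq : HasFPowerSeriesOnBall g.1 q 0 (2⁻¹ : ℝ≥0) := by
      refine ⟨hrad, by norm_num, ?_⟩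
      intro y hy
      simp only [EMetric.mem_ball, edist_zero_right] at hy
      have hy1 : ‖y‖ < 1 := by
        have : ‖y‖₊ < (2⁻¹ : ℝ≥0) := by exact_mod_cast hy
        have := (NNReal.coe_lt_coe.mpr this)
        rw [coe_nnnorm] at this
        calc ‖y‖ < ((2⁻¹ : ℝ≥0) : ℝ) := this
          _ < 1 := by norm_num
      have hmem : y ∈ ball (0:ℂ) 1 := by
        simp only [Metric.mem_ball, Complex.dist_eq, sub_zero]
        exact hy1
      have hsy := (hcoeff n ω y hmem).1
      have heqy := (hcoeff n ω y hmem).2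
      have hterm : (fun j => q j fun _ => y) = fun j => c n j ω * y ^ j := by
        funext j
        simp only [hqdef, ContinuousMultilinearMap.mkPiRing_apply, Fin.prod_const, smul_eq_mul]
        ring
      rw [hterm, zero_add]
      rw [← hgdef] at heqy
      rw [heqy]
      exact hsy.hasSum
    have hA := HolDAux.hasFPowerSeriesOnBall g (r := (2⁻¹ : ℝ≥0)) (by norm_num) (by norm_num)
    have heq : q = cauchyPowerSeries g.1 0 ((2⁻¹ : ℝ≥0) : ℝ) :=
      hq.hasFPowerSeriesAt.eq_formalMultilinearSeries hA.hasFPowerSeriesAt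
    have := congrFun heq k
    have happ := congrArg (fun (T : ContinuousMultilinearMap ℂ (fun _ : Fin k => ℂ) ℂ) =>
      T (fun _ => 1)) this
    simp only [hqdef, ContinuousMultilinearMap.mkPiRing_apply, Fin.prod_const,
      one_pow, one_smul] at happ
    rw [happ, Acoef_eq g (r := (2⁻¹ : ℝ≥0)) (by norm_num) (by norm_num) k]
  have hcm : ∀ n k, Measurable (fun ω => c n k ω) := by
    intro n k
    have : (fun ω => c n k ω) = (Acoef k) ∘ (f n) := funext fun ω => hc n ω k
    rw [this]
    exact (continuous_Acoef k).measurable.comp (hfmeas n)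
  -- Step 2: closed compact tight sets with coefficient bounds
  have hKex : ∀ ε : ℝ, 0 < ε → ∃ K : Set HolD, IsCompact K ∧ IsClosed K ∧
      (∀ n : ℕ, 1 ≤ n → 1 - ENNReal.ofReal ε < P {ω : Ω | f n ω ∈ K}) ∧
      ∃ M : ℕ → ℝ, (∀ i, 0 ≤ M i) ∧
        (∀ i, ∀ g ∈ K, ∀ k : ℕ, ‖Acoef k g‖ * rseq i ^ k ≤ M i) := by
    intro ε hε
    obtain ⟨K, hKcomp, hKP⟩ := htight ε hε
    obtain ⟨K', hK'comp, hK'closed, hKK'⟩ := exists_closed_compact hKcomp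
    refine ⟨K', hK'comp, hK'closed, ?_, ?_⟩
    · intro n hn
      exact lt_of_lt_of_le (hKP n hn) (measure_mono fun ω hω => hKK' hω)
    · have h := fun i : ℕ => exists_bound hK'comp (rseq_pos i).le (rseq_lt_one i)
      choose M hM0 hM using h
      refine ⟨M, hM0, fun i g hg k => ?_⟩
      exact norm_Acoef_le g (rseq_pos i) (rseq_lt_one i)
        (fun z hz => hM i g hg z (le_of_eq hz)) k
  -- Step 3: transfer of bounds to the limit coefficients via portmanteau
  have hQbd : ∀ (K : Set HolD), IsClosed K → ∀ (M : ℕ → ℝ),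
      (∀ i, ∀ g ∈ K, ∀ k : ℕ, ‖Acoef k g‖ * rseq i ^ k ≤ M i) →
      ∀ e : ℝ≥0∞, (∀ n : ℕ, 1 ≤ n → 1 - e < P {ω : Ω | f n ω ∈ K}) →
      1 - e ≤ P' {ω | ∀ k i : ℕ, ‖Q k ω‖ * rseq i ^ k ≤ M i} := by
    intro K hKclosed M hM e hKP
    -- the laws of the coefficient vectors
    have hstep : ∀ m : ℕ,
        1 - e ≤ P' {ω | ∀ (k : Fin (m+1)) (i : ℕ), ‖Q (k:ℕ) ω‖ * rseq i ^ (k:ℕ) ≤ M i} := by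
      intro m
      set X : ℕ → Ω → (Fin (m+1) → ℂ) := fun n ω i => c n (i:ℕ) ω with hXdef
      set Y : Ω' → (Fin (m+1) → ℂ) := fun ω i => Q (i:ℕ) ω with hYdef
      have hXm : ∀ n, Measurable (X n) := fun n => measurable_pi_lambda _ fun i => hcm n i
      have hYm : Measurable Y := measurable_pi_lambda _ fun i => hQmeas i
      set μ : ℕ → ProbabilityMeasure (Fin (m+1) → ℂ) :=
        fun n => ⟨P.map (X n), Measure.isProbabilityMeasure_map (hXm n).aemeasurable⟩ with hμdef
      set ν : ProbabilityMeasure (Fin (m+1) → ℂ) :=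
        ⟨P'.map Y, Measure.isProbabilityMeasure_map hYm.aemeasurable⟩ with hνdef
      have htendsto : Tendsto μ atTop (𝓝 ν) := by
        rw [ProbabilityMeasure.tendsto_iff_forall_integral_tendsto]
        intro ψ
        have h1 : ∀ n, ∫ x, ψ x ∂((μ n : Measure (Fin (m+1) → ℂ))) =
            ∫ ω, ψ (X n ω) ∂P := fun n =>
          integral_map (hXm n).aemeasurable ψ.continuous.aestronglyMeasurable
        have h2 : ∫ x, ψ x ∂((ν : Measure (Fin (m+1) → ℂ))) = ∫ ω, ψ (Y ω) ∂P' :=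
          integral_map hYm.aemeasurable ψ.continuous.aestronglyMeasurable
        simp only [h1, h2]
        exact hconv m ψ
      set F : Set (Fin (m+1) → ℂ) :=
        {a | ∀ (k : Fin (m+1)) (i : ℕ), ‖a k‖ * rseq i ^ (k:ℕ) ≤ M i} with hFdef
      have hFclosed : IsClosed F := by
        have : F = ⋂ (k : Fin (m+1)) (i : ℕ),
            {a : Fin (m+1) → ℂ | ‖a k‖ * rseq i ^ (k:ℕ) ≤ M i} := by
          ext a
          simp [Set.mem_iInter, hFdef]
        rw [this]
        exact isClosed_iInter fun k => isClosed_iInter fun i =>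
          isClosed_le (((continuous_apply k).norm).mul continuous_const) continuous_const
      have hlimsup := ProbabilityMeasure.limsup_measure_closed_le_of_tendsto htendsto hFclosed
      have hlow : ∀ᶠ n in atTop, 1 - e ≤ (μ n : Measure (Fin (m+1) → ℂ)) F := by
        rw [eventually_atTop]
        refine ⟨1, fun n hn => ?_⟩
        have hmap : (μ n : Measure (Fin (m+1) → ℂ)) F = P (X n ⁻¹' F) :=
          Measure.map_apply (hXm n) hFclosed.measurableSet
        rw [hmap]
        refine le_trans (hKP n hn).le (measure_mono ?_)
        intro ω hω
        rw [Set.mem_preimage, hFdef, Set.mem_setOf_eq]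
        intro k i
        rw [hXdef]
        simp only
        rw [hc n ω (k:ℕ)]
        exact hM i (f n ω) hω (k:ℕ)
      have hconst : 1 - e ≤ Filter.limsup (fun n => (μ n : Measure (Fin (m+1) → ℂ)) F) atTop := by
        have h := Filter.limsup_le_limsup hlow
        rwa [Filter.limsup_const] at h
      have hmapν : (ν : Measure (Fin (m+1) → ℂ)) F = P' (Y ⁻¹' F) :=
        Measure.map_apply hYm hFclosed.measurableSet
      have : Y ⁻¹' F = {ω | ∀ (k : Fin (m+1)) (i : ℕ), ‖Q (k:ℕ) ω‖ * rseq i ^ (k:ℕ) ≤ M i} := rfl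
      calc (1:ℝ≥0∞) - e ≤ _ := hconst
        _ ≤ (ν : Measure (Fin (m+1) → ℂ)) F := hlimsup
        _ = _ := by rw [hmapν, this]
    -- pass to the intersection over m
    set E : ℕ → Set Ω' := fun m =>
      {ω | ∀ (k : Fin (m+1)) (i : ℕ), ‖Q (k:ℕ) ω‖ * rseq i ^ (k:ℕ) ≤ M i} with hEdef
    have hEmeas : ∀ m, MeasurableSet (E m) := by
      intro m
      have : E m = ⋂ (k : Fin (m+1)) (i : ℕ),
          {ω | ‖Q (k:ℕ) ω‖ * rseq i ^ (k:ℕ) ≤ M i} := by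
        ext ω
        simp [hEdef, Set.mem_iInter]
      rw [this]
      exact MeasurableSet.iInter fun k => MeasurableSet.iInter fun i =>
        measurableSet_le (((hQmeas _).norm).mul measurable_const) measurable_const
    have hanti : Antitone E := by
      intro m m' hmm' ω hω k i
      exact hω ⟨(k:ℕ), lt_of_lt_of_le k.2 (by omega)⟩ i
    have hinter : ⋂ m, E m = {ω | ∀ k i : ℕ, ‖Q k ω‖ * rseq i ^ k ≤ M i} := by
      ext ω
      simp only [Set.mem_iInter, hEdef, Set.mem_setOf_eq]
      constructor
      · intro h k i
        exact h k ⟨k, by omega⟩ i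
      · intro h m k i
        exact h (k:ℕ) i
    have htendE := tendsto_measure_iInter_atTop
      (fun m => (hEmeas m).nullMeasurableSet) hanti ⟨0, measure_ne_top P' _⟩
    rw [hinter] at htendE
    exact ge_of_tendsto htendE (Filter.eventually_atTop.mpr ⟨0, fun m _ => hstep m⟩)
  -- Step 4: the good set and its properties
  obtain ⟨Ω₀, hΩ₀meas, hΩ₀ae, hbnd⟩ :
      ∃ Ω₀ : Set Ω', MeasurableSet Ω₀ ∧ (∀ᵐ ω ∂P', ω ∈ Ω₀) ∧
        ∀ ω ∈ Ω₀, ∀ ρ : ℝ, 0 < ρ → ρ < 1 →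
          ∃ C, 0 ≤ C ∧ ∀ k, ‖Q k ω‖ * ρ ^ k ≤ C := by
    have h := fun j : ℕ => hKex (1/(j+1)) (by positivity)
    choose K hKcomp hKclosed hKP M hM0 hM using h
    set E : ℕ → Set Ω' := fun j => {ω | ∀ k i : ℕ, ‖Q k ω‖ * rseq i ^ k ≤ M j i} with hEdef
    have hEmeas : ∀ j, MeasurableSet (E j) := by
      intro j
      have : E j = ⋂ (k : ℕ) (i : ℕ), {ω | ‖Q k ω‖ * rseq i ^ k ≤ M j i} := by
        ext ω
        simp [hEdef, Set.mem_iInter]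
      rw [this]
      exact MeasurableSet.iInter fun k => MeasurableSet.iInter fun i =>
        measurableSet_le (((hQmeas _).norm).mul measurable_const) measurable_const
    have hEP : ∀ j : ℕ, 1 - ENNReal.ofReal (1/(j+1)) ≤ P' (E j) := fun j =>
      hQbd (K j) (hKclosed j) (M j) (hM j) _ (hKP j)
    refine ⟨⋃ j, E j, MeasurableSet.iUnion hEmeas, ?_, ?_⟩
    · have h1 : P' (⋃ j, E j) = 1 := by
        refine le_antisymm prob_le_one ?_
        refine ENNReal.le_of_forall_pos_le_add fun ε hε _ => ?_
        obtain ⟨nn, hnn⟩ := exists_nat_one_div_lt (show (0:ℝ) < ε from hε)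
        have hle1 : ENNReal.ofReal (1/(nn+1:ℝ)) ≤ 1 := by
          apply ENNReal.ofReal_le_one.mpr
          rw [div_le_one (by positivity)]
          linarith [Nat.cast_nonneg (α := ℝ) nn]
        calc (1:ℝ≥0∞) = (1 - ENNReal.ofReal (1/(nn+1:ℝ))) + ENNReal.ofReal (1/(nn+1:ℝ)) :=
              (tsub_add_cancel_of_le hle1).symm
          _ ≤ P' (⋃ j, E j) + ε := by
              apply add_le_add
              · exact le_trans (hEP nn) (measure_mono (Set.subset_iUnion E nn))
              · calc ENNReal.ofReal (1/(nn+1:ℝ)) ≤ ENNReal.ofReal (ε:ℝ) :=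
                    ENNReal.ofReal_le_ofReal hnn.le
                  _ = (ε : ℝ≥0∞) := ENNReal.ofReal_coe_nnreal
      rw [ae_iff]
      have h2 : {ω | ¬ ω ∈ ⋃ j, E j} = (⋃ j, E j)ᶜ := rfl
      rw [h2]
      exact (prob_compl_eq_zero_iff (MeasurableSet.iUnion hEmeas)).mpr h1
    · intro ω hω ρ hρ0 hρ1
      rw [Set.mem_iUnion] at hω
      obtain ⟨j, hj⟩ := hω
      obtain ⟨i, hi⟩ := exists_rseq_gt hρ1
      refine ⟨M j i, hM0 j i, fun k => ?_⟩
      calc ‖Q k ω‖ * ρ ^ k ≤ ‖Q k ω‖ * rseq i ^ k :=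
            mul_le_mul_of_nonneg_left (pow_le_pow_left₀ hρ0.le hi.le k) (norm_nonneg _)
        _ ≤ M j i := hj k i
  -- Step 5: define G
  set G : Ω' → HolD := fun ω =>
    if hω : ω ∈ Ω₀ then
      ⟨fun z => ∑' k, Q k ω * z ^ k, holo_of_bounds (hbnd ω hω)⟩
    else ⟨0, differentiableOn_const 0⟩ with hGdef
  have hGval : ∀ ω ∈ Ω₀, ∀ z : ℂ, (G ω).1 z = ∑' k, Q k ω * z ^ k := by
    intro ω hω z
    simp only [hGdef, dif_pos hω]
    exact congrArg (fun g : HolD => g.1 z) (dif_pos hω)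
  refine ⟨G, ?_, ?_⟩
  · filter_upwards [hΩ₀ae] with ω hω z hz
    have hz1 : ‖z‖ < 1 := by
      simpa [Metric.mem_ball, Complex.dist_eq, sub_zero] using hz
    have hρ0 : (0:ℝ) < (1 + ‖z‖)/2 := by positivity
    have hρ1 : ((1 + ‖z‖)/2 : ℝ) < 1 := by linarith
    have hz' : ‖z‖ < (1 + ‖z‖)/2 := by linarith
    obtain ⟨C, hC0, hC⟩ := hbnd ω hω _ hρ0 hρ1
    exact ⟨summable_of_bound hρ0 hC hz', hGval ω hω z⟩
  -- Step 6: convergence in law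
  intro φ
  have hQt : ∀ ω, Tendsto (fun m => trunc m (fun i : Fin (m+1) =>
      (if ω ∈ Ω₀ then Q (i:ℕ) ω else 0))) atTop (𝓝 (G ω)) := by
    intro ω
    by_cases hω : ω ∈ Ω₀
    · have heq : (fun m => trunc m (fun i : Fin (m+1) => (if ω ∈ Ω₀ then Q (i:ℕ) ω else 0)))
          = fun m => trunc m (fun i : Fin (m+1) => Q (i:ℕ) ω) :=
        funext fun m => by rw [funext fun i : Fin (m+1) => if_pos hω]
      rw [heq]
      exact tendsto_trunc (hbnd ω hω) (fun z _ => hGval ω hω z)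
    · have heq : (fun m => trunc m (fun i : Fin (m+1) => (if ω ∈ Ω₀ then Q (i:ℕ) ω else 0)))
          = fun _ => (⟨0, differentiableOn_const 0⟩ : HolD) :=
        funext fun m => by
          rw [funext fun i : Fin (m+1) => if_neg hω]
          exact trunc_zero_eq m
      rw [heq, show G ω = ⟨0, differentiableOn_const 0⟩ from dif_neg hω]
      exact tendsto_const_nhds
  -- constants
  set Cφ : ℝ := ‖φ‖ with hCφdef
  have hCφ0 : 0 ≤ Cφ := norm_nonneg _
  rw [Metric.tendsto_atTop]
  intro ε hε
  set ε1 : ℝ := ε/5 with hε1def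
  have hε1 : 0 < ε1 := by rw [hε1def]; positivity
  set ε2 : ℝ := ε1/(2*Cφ+1) with hε2def
  have hε2 : 0 < ε2 := by rw [hε2def]; positivity
  obtain ⟨K, hKcomp, hKclosed, hKP, M, hM0, hM⟩ := hKex ε2 hε2
  obtain ⟨m₁, hm₁⟩ := unif_approx φ hKcomp hε1
  -- dominated convergence for the truncations of the limit
  have hFmeas : ∀ m : ℕ, AEStronglyMeasurable
      (fun ω => φ (trunc m (fun i : Fin (m+1) => (if ω ∈ Ω₀ then Q (i:ℕ) ω else 0)))) P' := by
    intro m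
    have hmeaspi : Measurable (fun ω => fun i : Fin (m+1) =>
        (if ω ∈ Ω₀ then Q (i:ℕ) ω else 0)) :=
      measurable_pi_lambda _ fun i => Measurable.ite hΩ₀meas (hQmeas _) measurable_const
    exact ((φ.continuous.comp (continuous_trunc m)).measurable.comp hmeaspi).aestronglyMeasurable
  have hDCT : Tendsto (fun m => ∫ ω, φ (trunc m (fun i : Fin (m+1) =>
      (if ω ∈ Ω₀ then Q (i:ℕ) ω else 0))) ∂P') atTop (𝓝 (∫ ω, φ (G ω) ∂P')) := by
    apply tendsto_integral_of_dominated_convergence (fun _ => Cφ) hFmeas (integrable_const _)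
    · intro m
      exact Filter.Eventually.of_forall fun ω => φ.norm_coe_le_norm _
    · exact Filter.Eventually.of_forall fun ω =>
        (φ.continuous.continuousAt.tendsto).comp (hQt ω)
  have hcongr : ∀ m : ℕ, ∫ ω, φ (trunc m (fun i : Fin (m+1) =>
      (if ω ∈ Ω₀ then Q (i:ℕ) ω else 0))) ∂P'
      = ∫ ω, φ (trunc m (fun i : Fin (m+1) => Q (i:ℕ) ω)) ∂P' := by
    intro m
    apply integral_congr_ae
    filter_upwards [hΩ₀ae] with ω hω
    rw [funext fun i : Fin (m+1) => if_pos hω]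
  obtain ⟨m₂, hm₂⟩ := Metric.tendsto_atTop.mp hDCT ε1 hε1
  set m : ℕ := max m₁ m₂ with hmdef
  -- middle term
  have hmid := hconv m (φ.compContinuous ⟨trunc m, continuous_trunc m⟩)
  obtain ⟨N, hN⟩ := Metric.tendsto_atTop.mp hmid ε1 hε1
  refine ⟨max N 1, fun n hn => ?_⟩
  have hn1 : 1 ≤ n := le_trans (le_max_right _ _) hn
  have hnN : N ≤ n := le_trans (le_max_left _ _) hn
  set a : ℝ := ∫ ω, φ (f n ω) ∂P with hadef
  set b : ℝ := ∫ ω, φ (trunc m (fun i : Fin (m+1) => c n (i:ℕ) ω)) ∂P with hbdef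
  set t : ℝ := ∫ ω, φ (trunc m (fun i : Fin (m+1) => Q (i:ℕ) ω)) ∂P' with htdef
  set L : ℝ := ∫ ω, φ (G ω) ∂P' with hLdef
  -- the three bounds
  have hb2 : dist b t < ε1 := by
    have := hN n hnN
    simpa only [BoundedContinuousFunction.compContinuous_apply, ContinuousMap.coe_mk] using this
  have hb3 : dist t L < ε1 := by
    have := hm₂ m (le_max_right _ _)
    rwa [hcongr m] at this
  have hb1 : dist a b ≤ ε1 + ε1 := by
    set S : Set Ω := (f n) ⁻¹' Kᶜ with hSdef
    have hKmeas : MeasurableSet ((f n) ⁻¹' K) := hfmeas n hKclosed.measurableSet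
    have hSmeas : MeasurableSet S := hfmeas n hKclosed.measurableSet.compl
    have hInt1 : Integrable (fun ω => φ (f n ω)) P :=
      Integrable.mono' (integrable_const Cφ)
        ((φ.continuous.measurable.comp (hfmeas n)).aestronglyMeasurable)
        (Filter.Eventually.of_forall fun ω => φ.norm_coe_le_norm _)
    have hmeas2 : AEStronglyMeasurable
        (fun ω => φ (trunc m (fun i : Fin (m+1) => c n (i:ℕ) ω))) P := by
      have hmeaspi : Measurable (fun ω => fun i : Fin (m+1) => c n (i:ℕ) ω) :=
        measurable_pi_lambda _ fun i => hcm n _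
      exact ((φ.continuous.comp (continuous_trunc m)).measurable.comp hmeaspi).aestronglyMeasurable
    have hInt2 : Integrable (fun ω => φ (trunc m (fun i : Fin (m+1) => c n (i:ℕ) ω))) P :=
      Integrable.mono' (integrable_const Cφ) hmeas2
        (Filter.Eventually.of_forall fun ω => φ.norm_coe_le_norm _)
    have hIndInt : Integrable (fun ω => S.indicator (fun _ => 2*Cφ) ω) P :=
      (integrable_const (2*Cφ)).indicator hSmeas
    have hptw : ∀ ω, ‖φ (f n ω) - φ (trunc m (fun i : Fin (m+1) => c n (i:ℕ) ω))‖
        ≤ ε1 + S.indicator (fun _ => 2*Cφ) ω := by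
      intro ω
      have hcrw : (fun i : Fin (m+1) => c n (i:ℕ) ω)
          = fun i : Fin (m+1) => Acoef (i:ℕ) (f n ω) :=
        funext fun i => hc n ω _
      by_cases hmem : f n ω ∈ K
      · rw [Set.indicator_of_notMem (by simpa [hSdef] using hmem), add_zero, hcrw]
        have h2 := hm₁ m (le_max_left _ _) (f n ω) hmem
        rw [Real.norm_eq_abs]
        exact h2
      · rw [Set.indicator_of_mem (by simpa [hSdef] using hmem)]
        calc ‖φ (f n ω) - φ (trunc m (fun i : Fin (m+1) => c n (i:ℕ) ω))‖
            ≤ ‖φ (f n ω)‖ + ‖φ (trunc m (fun i : Fin (m+1) => c n (i:ℕ) ω))‖ :=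
              norm_sub_le _ _
          _ ≤ Cφ + Cφ := add_le_add (φ.norm_coe_le_norm _) (φ.norm_coe_le_norm _)
          _ ≤ ε1 + 2*Cφ := by linarith
    have hPS : (P S).toReal ≤ ε2 := by
      have hcompl : P S = 1 - P ((f n) ⁻¹' K) := by
        rw [show S = ((f n) ⁻¹' K)ᶜ from by rw [hSdef, Set.preimage_compl]]
        exact prob_compl_eq_one_sub hKmeas
      have hp : 1 - ENNReal.ofReal ε2 ≤ P ((f n) ⁻¹' K) := (hKP n hn1).le
      have hle : P S ≤ ENNReal.ofReal ε2 := by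
        rw [hcompl, tsub_le_iff_right]
        exact tsub_le_iff_left.mp hp
      exact ENNReal.toReal_le_of_le_ofReal hε2.le hle
    calc dist a b
        = ‖∫ ω, (φ (f n ω) - φ (trunc m (fun i : Fin (m+1) => c n (i:ℕ) ω))) ∂P‖ := by
          rw [hadef, hbdef, dist_eq_norm, integral_sub hInt1 hInt2]
      _ ≤ ∫ ω, ‖φ (f n ω) - φ (trunc m (fun i : Fin (m+1) => c n (i:ℕ) ω))‖ ∂P :=
          norm_integral_le_integral_norm _
      _ ≤ ∫ ω, (ε1 + S.indicator (fun _ => 2*Cφ) ω) ∂P :=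
          integral_mono (hInt1.sub hInt2).norm ((integrable_const ε1).add hIndInt)
            hptw
      _ = ε1 + (2*Cφ) * (P S).toReal := by
          rw [integral_add (integrable_const ε1) hIndInt, integral_const,
            integral_indicator_const _ hSmeas]
          simp [measure_univ, smul_eq_mul, mul_comm]
          exact Or.inl rfl
      _ ≤ ε1 + ε1 := by
          have h3 : (2*Cφ) * (P S).toReal ≤ 2*Cφ * ε2 :=
            mul_le_mul_of_nonneg_left hPS (by positivity)
          have h4 : 2*Cφ*ε2 ≤ ε1 := by
            rw [hε2def, ← mul_div_assoc, div_le_iff₀ (by positivity : (0:ℝ) < 2*Cφ+1)]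
            nlinarith
          linarith
  calc dist a L ≤ dist a b + dist b t + dist t L := dist_triangle4 a b t L
    _ < (ε1 + ε1) + ε1 + ε1 := by
        apply add_lt_add_of_lt_of_lt (add_lt_add_of_le_of_lt hb1 hb2) hb3
    _ < ε := by rw [hε1def]; linarith


end
end

section
/- For every n ≥ 1 and 1 ≤ k ≤ n, E[|P_k^{(n)}|²] = n^{−k}·n!/(n−k)! ≤ 1, and E[P_k^{(n)}·conj(P_l^{(n)})] = 0 whenever k ≠ l. -/
open MeasureTheory ProbabilityTheory Filter

noncomputable section

/-- `P_k^{(n)} = ∑_{|I| = k} n^{-k/2} det(Aₙ(I))`, the sum over `k`-subsets `I ⊆ {1,…,n}` of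
the principal submatrix determinants, normalized by `n^{-k/2}`. -/
def Pcoef {Ω : Type*} (a : ℕ → ℕ → Ω → ℂ) (n k : ℕ) (ω : Ω) : ℂ :=
  ∑ I ∈ Finset.powersetCard k (Finset.univ : Finset (Fin n)),
    ((Real.sqrt n)⁻¹ : ℂ) ^ k * (Matrix.of fun i j : ↥I => a i.1.1 j.1.1 ω).det

namespace PcoefAux

variable {Ω : Type*} [MeasurableSpace Ω] {P : Measure Ω}

lemma integral_complex_mul [IsProbabilityMeasure P] {X Y : Ω → ℂ}
    (h : IndepFun X Y P) (hX : Integrable X P) (hY : Integrable Y P) :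
    ∫ ω, X ω * Y ω ∂P = (∫ ω, X ω ∂P) * ∫ ω, Y ω ∂P := by
  have hmul : Integrable (X * Y) P := h.integrable_mul hX hY
  have hXre : Integrable (fun ω => (X ω).re) P := by
    have := hX.re; simpa [RCLike.re_to_complex] using this
  have hXim : Integrable (fun ω => (X ω).im) P := by
    have := hX.im; simpa [RCLike.im_to_complex] using this
  have hYre : Integrable (fun ω => (Y ω).re) P := by
    have := hY.re; simpa [RCLike.re_to_complex] using this
  have hYim : Integrable (fun ω => (Y ω).im) P := by
    have := hY.im; simpa [RCLike.im_to_complex] using this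
  have irr : IndepFun (fun ω => (X ω).re) (fun ω => (Y ω).re) P :=
    h.comp Complex.measurable_re Complex.measurable_re
  have iri : IndepFun (fun ω => (X ω).re) (fun ω => (Y ω).im) P :=
    h.comp Complex.measurable_re Complex.measurable_im
  have iir : IndepFun (fun ω => (X ω).im) (fun ω => (Y ω).re) P :=
    h.comp Complex.measurable_im Complex.measurable_re
  have iii : IndepFun (fun ω => (X ω).im) (fun ω => (Y ω).im) P :=
    h.comp Complex.measurable_im Complex.measurable_im
  have e1 : ∫ ω, (X ω).re * (Y ω).re ∂P = (∫ ω, (X ω).re ∂P) * ∫ ω, (Y ω).re ∂P :=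
    irr.integral_fun_mul_eq_mul_integral hXre.aestronglyMeasurable hYre.aestronglyMeasurable
  have e2 : ∫ ω, (X ω).re * (Y ω).im ∂P = (∫ ω, (X ω).re ∂P) * ∫ ω, (Y ω).im ∂P :=
    iri.integral_fun_mul_eq_mul_integral hXre.aestronglyMeasurable hYim.aestronglyMeasurable
  have e3 : ∫ ω, (X ω).im * (Y ω).re ∂P = (∫ ω, (X ω).im ∂P) * ∫ ω, (Y ω).re ∂P :=
    iir.integral_fun_mul_eq_mul_integral hXim.aestronglyMeasurable hYre.aestronglyMeasurable
  have e4 : ∫ ω, (X ω).im * (Y ω).im ∂P = (∫ ω, (X ω).im ∂P) * ∫ ω, (Y ω).im ∂P :=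
    iii.integral_fun_mul_eq_mul_integral hXim.aestronglyMeasurable hYim.aestronglyMeasurable
  have i1 : Integrable (fun ω => (X ω).re * (Y ω).re) P := irr.integrable_mul hXre hYre
  have i2 : Integrable (fun ω => (X ω).re * (Y ω).im) P := iri.integrable_mul hXre hYim
  have i3 : Integrable (fun ω => (X ω).im * (Y ω).re) P := iir.integrable_mul hXim hYre
  have i4 : Integrable (fun ω => (X ω).im * (Y ω).im) P := iii.integrable_mul hXim hYim
  have A := integral_re (μ := P) hmul
  have B := integral_im (μ := P) hmul
  simp only [Pi.mul_apply, RCLike.re_to_complex, RCLike.im_to_complex] at A B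
  have AX := integral_re (μ := P) hX
  have AXi := integral_im (μ := P) hX
  have AY := integral_re (μ := P) hY
  have AYi := integral_im (μ := P) hY
  simp only [RCLike.re_to_complex, RCLike.im_to_complex] at AX AXi AY AYi
  apply Complex.ext
  · rw [← A]
    simp only [Complex.mul_re]
    rw [integral_sub i1 i4, e1, e4, AX, AXi, AY, AYi]
  · rw [← B]
    simp only [Complex.mul_im]
    rw [integral_add i2 i3, e2, e3, AX, AXi, AY, AYi]


lemma prod_indep_integral {ι : Type*} [IsProbabilityMeasure P] {Y : ι → Ω → ℂ}
    (hind : iIndepFun Y P)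
    (hm : ∀ i, Measurable (Y i)) (hint : ∀ i, Integrable (Y i) P) (s : Finset ι) :
    Integrable (fun ω => ∏ i ∈ s, Y i ω) P ∧
      ∫ ω, ∏ i ∈ s, Y i ω ∂P = ∏ i ∈ s, ∫ ω, Y i ω ∂P := by
  classical
  induction s using Finset.induction_on with
  | empty => simp
  | @insert j s hj ih =>
    have hfun : (fun ω => ∏ i ∈ s, Y i ω) = ∏ i ∈ s, Y i := by
      funext ω; rw [Finset.prod_apply]
    have hprod : IndepFun (Y j) (fun ω => ∏ i ∈ s, Y i ω) P := by
      rw [hfun]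
      exact (hind.indepFun_finsetProd_of_notMem hm hj).symm
    have hInt : Integrable (fun ω => ∏ i ∈ insert j s, Y i ω) P := by
      simp_rw [Finset.prod_insert hj]
      exact hprod.integrable_mul (hint j) ih.1
    refine ⟨hInt, ?_⟩
    simp_rw [Finset.prod_insert hj]
    calc ∫ ω, Y j ω * ∏ i ∈ s, Y i ω ∂P
        = (∫ ω, Y j ω ∂P) * ∫ ω, ∏ i ∈ s, Y i ω ∂P :=
          integral_complex_mul hprod (hint j) ih.1
      _ = _ := by rw [ih.2]

lemma core_integral [IsProbabilityMeasure P]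
    (a : ℕ → ℕ → Ω → ℂ) (hmeas : ∀ i j, Measurable (a i j))
    (hindep : iIndepFun (fun p : ℕ × ℕ => a p.1 p.2) P)
    (hident : ∀ i j, IdentDistrib (a i j) (a 0 0) P P)
    (hL2 : MemLp (a 0 0) 2 P)
    (hmean : ∫ ω, a 0 0 ω ∂P = 0)
    (hvar : ∫ ω, ‖a 0 0 ω‖ ^ 2 ∂P = 1)
    (S T : Finset (ℕ × ℕ)) :
    Integrable (fun ω => (∏ p ∈ S, a p.1 p.2 ω) * (starRingEnd ℂ) (∏ p ∈ T, a p.1 p.2 ω)) P ∧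
    ∫ ω, (∏ p ∈ S, a p.1 p.2 ω) * (starRingEnd ℂ) (∏ p ∈ T, a p.1 p.2 ω) ∂P
      = if S = T then 1 else 0 := by
  classical
  have hconj : Measurable fun x : ℂ => (starRingEnd ℂ) x :=
    (RCLike.continuous_conj (K := ℂ)).measurable
  have hmc : ∀ z : ℂ, z * (starRingEnd ℂ) z = ((‖z‖ ^ 2 : ℝ) : ℂ) := fun z => by
    rw [Complex.mul_conj, Complex.normSq_eq_norm_sq]
  set g : ℕ × ℕ → ℂ → ℂ := fun p x =>
    (if p ∈ S then x else 1) * (if p ∈ T then (starRingEnd ℂ) x else 1) with hg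
  have hgmeas : ∀ p, Measurable (g p) := by
    intro p
    apply Measurable.mul <;> split_ifs
    · exact measurable_id
    · exact measurable_const
    · exact hconj
    · exact measurable_const
  set Y : ℕ × ℕ → Ω → ℂ := fun p ω => g p (a p.1 p.2 ω) with hY
  have hindepY : iIndepFun Y P :=
    hindep.comp g hgmeas
  have hmeasY : ∀ p, Measurable (Y p) := fun p => (hgmeas p).comp (hmeas p.1 p.2)
  have hL2p : ∀ p : ℕ × ℕ, MemLp (a p.1 p.2) 2 P :=
    fun p => (hident p.1 p.2).symm.memLp_snd hL2
  have hintA : ∀ p : ℕ × ℕ, Integrable (a p.1 p.2) P :=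
    fun p => (hL2p p).integrable one_le_two
  have hintConj : ∀ p : ℕ × ℕ, Integrable (fun ω => (starRingEnd ℂ) (a p.1 p.2 ω)) P := by
    intro p
    refine (hintA p).norm.mono' ((hconj.comp (hmeas p.1 p.2)).aestronglyMeasurable) ?_
    exact Filter.Eventually.of_forall fun ω => by simp
  have hintSq : ∀ p : ℕ × ℕ, Integrable (fun ω => a p.1 p.2 ω * (starRingEnd ℂ) (a p.1 p.2 ω)) P := by
    intro p
    have h1 : Integrable (fun ω => ‖a p.1 p.2 ω‖ ^ 2) P :=
      (memLp_two_iff_integrable_sq_norm ((hmeas p.1 p.2).aestronglyMeasurable)).mp (hL2p p)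
    have h2 := h1.ofReal (𝕜 := ℂ)
    exact h2.congr (Filter.Eventually.of_forall fun ω => (hmc _).symm)
  have hintY : ∀ p, Integrable (Y p) P := by
    intro p
    rw [hY]
    simp only [hg]
    by_cases h1 : p ∈ S <;> by_cases h2 : p ∈ T <;> simp only [h1, h2, if_true, if_false]
    · simpa using hintSq p
    · simpa using hintA p
    · simpa using hintConj p
    · simpa using (integrable_const (1 : ℂ) (μ := P))
  have hEa : ∀ p : ℕ × ℕ, ∫ ω, a p.1 p.2 ω ∂P = 0 :=
    fun p => ((hident p.1 p.2).integral_eq).trans hmean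
  have hE2 : ∀ p : ℕ × ℕ, ∫ ω, ‖a p.1 p.2 ω‖ ^ 2 ∂P = 1 := by
    intro p
    have := ((hident p.1 p.2).comp (measurable_norm.pow_const 2)).integral_eq
    exact this.trans hvar
  have hval : ∀ p : ℕ × ℕ, (p ∈ S ↔ p ∈ T) → p ∈ S ∪ T → ∫ ω, Y p ω ∂P = 1 := by
    intro p hiff hmem
    have h1 : p ∈ S := by
      rcases Finset.mem_union.mp hmem with h | h
      · exact h
      · exact hiff.mpr h
    have h2 : p ∈ T := hiff.mp h1
    simp only [hY, hg, h1, h2, if_true]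
    have heq : ∫ ω, a p.1 p.2 ω * (starRingEnd ℂ) (a p.1 p.2 ω) ∂P
        = ∫ ω, ((‖a p.1 p.2 ω‖ ^ 2 : ℝ) : ℂ) ∂P :=
      integral_congr_ae (Filter.Eventually.of_forall fun ω => hmc _)
    have h3 : ∫ ω, ((‖a p.1 p.2 ω‖ ^ 2 : ℝ) : ℂ) ∂P
        = ((∫ ω, ‖a p.1 p.2 ω‖ ^ 2 ∂P : ℝ) : ℂ) := integral_ofReal
    rw [heq, h3, hE2 p, Complex.ofReal_one]
  have hval0 : ∀ p : ℕ × ℕ, ¬(p ∈ S ↔ p ∈ T) → ∫ ω, Y p ω ∂P = 0 := by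
    intro p hiff
    by_cases h1 : p ∈ S <;> by_cases h2 : p ∈ T
    · exact absurd (iff_of_true h1 h2) hiff
    · simp only [hY, hg, h1, h2, if_true, if_false, mul_one]
      exact hEa p
    · simp only [hY, hg, h1, h2, if_true, if_false, one_mul]
      rw [integral_conj, hEa p, map_zero]
    · exact absurd (iff_of_false h1 h2) hiff
  have hsplit : ∀ ω, (∏ p ∈ S, a p.1 p.2 ω) * (starRingEnd ℂ) (∏ p ∈ T, a p.1 p.2 ω)
      = ∏ p ∈ S ∪ T, Y p ω := by
    intro ω
    have h1 : ∏ p ∈ S ∪ T, (if p ∈ S then a p.1 p.2 ω else 1) = ∏ p ∈ S, a p.1 p.2 ω := by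
      rw [Finset.prod_ite_mem, Finset.union_inter_cancel_left]
    have h2 : ∏ p ∈ S ∪ T, (if p ∈ T then (starRingEnd ℂ) (a p.1 p.2 ω) else 1)
        = ∏ p ∈ T, (starRingEnd ℂ) (a p.1 p.2 ω) := by
      rw [Finset.prod_ite_mem, Finset.union_inter_cancel_right]
    rw [map_prod, ← h1, ← h2, ← Finset.prod_mul_distrib]
  obtain ⟨hInt, hVal⟩ := prod_indep_integral hindepY hmeasY hintY (S ∪ T)
  constructor
  · exact hInt.congr (Filter.Eventually.of_forall fun ω => (hsplit ω).symm)
  · rw [integral_congr_ae (Filter.Eventually.of_forall hsplit), hVal]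
    by_cases hST : S = T
    · subst hST
      rw [if_pos rfl, Finset.union_self]
      exact Finset.prod_eq_one fun p hp => hval p (Iff.rfl) (Finset.mem_union_left _ hp)
    · rw [if_neg hST]
      have : ∃ p, ¬(p ∈ S ↔ p ∈ T) := by
        by_contra h
        push_neg at h
        exact hST (Finset.ext fun p => h p)
      obtain ⟨p, hp⟩ := this
      have hmem : p ∈ S ∪ T := by
        by_cases h1 : p ∈ S
        · exact Finset.mem_union_left _ h1
        · by_cases h2 : p ∈ T
          · exact Finset.mem_union_right _ h2
          · exact absurd (iff_of_false h1 h2) hp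
      exact Finset.prod_eq_zero hmem (hval0 p hp)

def posSet {n : ℕ} (I : Finset (Fin n)) (σ : Equiv.Perm ↥I) : Finset (ℕ × ℕ) :=
  Finset.univ.image fun i : ↥I => ((((σ i : Fin n)) : ℕ), (((i : Fin n)) : ℕ))

lemma posSet_map_inj {n : ℕ} (I : Finset (Fin n)) (σ : Equiv.Perm ↥I) :
    Function.Injective fun i : ↥I => ((((σ i : Fin n)) : ℕ), (((i : Fin n)) : ℕ)) := by
  intro i j h
  have h2 := congrArg Prod.snd h
  exact Subtype.ext (Fin.ext h2)

lemma posSet_card {n : ℕ} (I : Finset (Fin n)) (σ : Equiv.Perm ↥I) :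
    (posSet I σ).card = I.card := by
  rw [posSet, Finset.card_image_of_injective _ (posSet_map_inj I σ), Finset.card_univ,
    Fintype.card_coe]

lemma prod_posSet {n : ℕ} {M : Type*} [CommMonoid M] (I : Finset (Fin n)) (σ : Equiv.Perm ↥I)
    (f : ℕ × ℕ → M) :
    ∏ p ∈ posSet I σ, f p = ∏ i : ↥I, f ((((σ i : Fin n)) : ℕ), (((i : Fin n)) : ℕ)) :=
  Finset.prod_image fun i _ j _ h => posSet_map_inj I σ h

lemma posSet_snd {n : ℕ} (I : Finset (Fin n)) (σ : Equiv.Perm ↥I) :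
    (posSet I σ).image Prod.snd = I.image Fin.val := by
  rw [posSet, Finset.image_image, Finset.univ_eq_attach]
  conv_rhs => rw [← Finset.attach_image_val (s := I), Finset.image_image]
  rfl

lemma posSet_eq_I {n : ℕ} {I J : Finset (Fin n)} {σ : Equiv.Perm ↥I} {τ : Equiv.Perm ↥J}
    (h : posSet I σ = posSet J τ) : I = J := by
  have h2 := congrArg (Finset.image Prod.snd) h
  rw [posSet_snd, posSet_snd] at h2
  exact Finset.image_injective Fin.val_injective h2

lemma posSet_eq_perm {n : ℕ} {I : Finset (Fin n)} {σ τ : Equiv.Perm ↥I}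
    (h : posSet I σ = posSet I τ) : σ = τ := by
  apply Equiv.ext
  intro i
  have hmem : ((((σ i : Fin n)) : ℕ), (((i : Fin n)) : ℕ)) ∈ posSet I τ := by
    rw [← h, posSet]
    exact Finset.mem_image_of_mem _ (Finset.mem_univ i)
  rw [posSet, Finset.mem_image] at hmem
  obtain ⟨j, -, hj⟩ := hmem
  have h2 : (((j : Fin n)) : ℕ) = (((i : Fin n)) : ℕ) := congrArg Prod.snd hj
  have hji : j = i := Subtype.ext (Fin.ext h2)
  subst hji
  have h1 : (((τ j : Fin n)) : ℕ) = (((σ j : Fin n)) : ℕ) := congrArg Prod.fst hj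
  exact (Subtype.ext (Fin.ext h1)).symm

lemma Pcoef_expand {Ω : Type*} (a : ℕ → ℕ → Ω → ℂ) (n k : ℕ) (ω : Ω) :
    Pcoef a n k ω = ∑ I ∈ Finset.powersetCard k (Finset.univ : Finset (Fin n)),
      ∑ σ : Equiv.Perm ↥I,
        (((Real.sqrt n)⁻¹ : ℂ) ^ k * ((Equiv.Perm.sign σ : ℤ) : ℂ))
          * ∏ p ∈ posSet I σ, a p.1 p.2 ω := by
  unfold Pcoef
  refine Finset.sum_congr rfl fun I _ => ?_
  rw [Matrix.det_apply, Finset.mul_sum]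
  refine Finset.sum_congr rfl fun σ _ => ?_
  rw [prod_posSet]
  simp only [Matrix.of_apply, Units.smul_def, zsmul_eq_mul, mul_assoc]

lemma Pcoef_mul_conj_integral [IsProbabilityMeasure P]
    (a : ℕ → ℕ → Ω → ℂ) (hmeas : ∀ i j, Measurable (a i j))
    (hindep : iIndepFun (fun p : ℕ × ℕ => a p.1 p.2) P)
    (hident : ∀ i j, IdentDistrib (a i j) (a 0 0) P P)
    (hL2 : MemLp (a 0 0) 2 P)
    (hmean : ∫ ω, a 0 0 ω ∂P = 0)
    (hvar : ∫ ω, ‖a 0 0 ω‖ ^ 2 ∂P = 1)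
    (n k l : ℕ) :
    ∫ ω, Pcoef a n k ω * (starRingEnd ℂ) (Pcoef a n l ω) ∂P
      = ∑ I ∈ Finset.powersetCard k (Finset.univ : Finset (Fin n)),
        ∑ J ∈ Finset.powersetCard l (Finset.univ : Finset (Fin n)),
        ∑ σ : Equiv.Perm ↥I, ∑ τ : Equiv.Perm ↥J,
          ((((Real.sqrt n)⁻¹ : ℂ) ^ k * ((Equiv.Perm.sign σ : ℤ) : ℂ))
            * (((Real.sqrt n)⁻¹ : ℂ) ^ l * ((Equiv.Perm.sign τ : ℤ) : ℂ)))
          * (if posSet I σ = posSet J τ then (1 : ℂ) else 0) := by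
  classical
  have core := fun S T => core_integral (P := P) a hmeas hindep hident hL2 hmean hvar S T
  have h1 : ∀ ω, Pcoef a n k ω * (starRingEnd ℂ) (Pcoef a n l ω)
      = ∑ I ∈ Finset.powersetCard k (Finset.univ : Finset (Fin n)),
        ∑ J ∈ Finset.powersetCard l (Finset.univ : Finset (Fin n)),
        ∑ σ : Equiv.Perm ↥I, ∑ τ : Equiv.Perm ↥J,
          ((((Real.sqrt n)⁻¹ : ℂ) ^ k * ((Equiv.Perm.sign σ : ℤ) : ℂ))
            * (((Real.sqrt n)⁻¹ : ℂ) ^ l * ((Equiv.Perm.sign τ : ℤ) : ℂ)))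
          * ((∏ p ∈ posSet I σ, a p.1 p.2 ω)
              * (starRingEnd ℂ) (∏ p ∈ posSet J τ, a p.1 p.2 ω)) := by
    intro ω
    rw [Pcoef_expand a n k ω, Pcoef_expand a n l ω, map_sum, Finset.sum_mul_sum]
    refine Finset.sum_congr rfl fun I _ => ?_
    refine Finset.sum_congr rfl fun J _ => ?_
    rw [map_sum, Finset.sum_mul_sum]
    refine Finset.sum_congr rfl fun σ _ => ?_
    refine Finset.sum_congr rfl fun τ _ => ?_
    rw [map_mul, mul_mul_mul_comm]
    congr 2
    simp only [map_mul, map_pow, map_inv₀, Complex.conj_ofReal, map_intCast]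
  calc ∫ ω, Pcoef a n k ω * (starRingEnd ℂ) (Pcoef a n l ω) ∂P
      = ∫ ω, ∑ I ∈ Finset.powersetCard k (Finset.univ : Finset (Fin n)),
        ∑ J ∈ Finset.powersetCard l (Finset.univ : Finset (Fin n)),
        ∑ σ : Equiv.Perm ↥I, ∑ τ : Equiv.Perm ↥J,
          ((((Real.sqrt n)⁻¹ : ℂ) ^ k * ((Equiv.Perm.sign σ : ℤ) : ℂ))
            * (((Real.sqrt n)⁻¹ : ℂ) ^ l * ((Equiv.Perm.sign τ : ℤ) : ℂ)))
          * ((∏ p ∈ posSet I σ, a p.1 p.2 ω)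
              * (starRingEnd ℂ) (∏ p ∈ posSet J τ, a p.1 p.2 ω)) ∂P :=
        integral_congr_ae (Filter.Eventually.of_forall h1)
    _ = _ := by
        rw [integral_finset_sum _ (fun I _ => integrable_finset_sum _ (fun J _ =>
          integrable_finset_sum _ (fun σ _ => integrable_finset_sum _ (fun τ _ =>
            ((core _ _).1).const_mul _))))]
        refine Finset.sum_congr rfl fun I _ => ?_
        rw [integral_finset_sum _ (fun J _ => integrable_finset_sum _ (fun σ _ =>
          integrable_finset_sum _ (fun τ _ => ((core _ _).1).const_mul _)))]
        refine Finset.sum_congr rfl fun J _ => ?_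
        rw [integral_finset_sum _ (fun σ _ => integrable_finset_sum _ (fun τ _ =>
          ((core _ _).1).const_mul _))]
        refine Finset.sum_congr rfl fun σ _ => ?_
        rw [integral_finset_sum _ (fun τ _ => ((core _ _).1).const_mul _)]
        refine Finset.sum_congr rfl fun τ _ => ?_
        rw [integral_const_mul, (core _ _).2]

end PcoefAux

/-- **Second moments of the determinantal coefficients**: for i.i.d. entries with mean `0` and
variance `1`, for `1 ≤ k ≤ n` one has `E[|P_k^{(n)}|²] = n^{-k} n!/(n-k)! ≤ 1`, and
`E[P_k^{(n)} conj(P_l^{(n)})] = 0` for `k ≠ l`. -/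
theorem Pcoef_moments
    {Ω : Type*} [MeasurableSpace Ω] (P : Measure Ω) [IsProbabilityMeasure P]
    (a : ℕ → ℕ → Ω → ℂ)
    (hmeas : ∀ i j, Measurable (a i j))
    (hindep : iIndepFun (fun p : ℕ × ℕ => a p.1 p.2) P)
    (hident : ∀ i j, IdentDistrib (a i j) (a 0 0) P P)
    (hL2 : MemLp (a 0 0) 2 P)
    (hmean : ∫ ω, a 0 0 ω ∂P = 0)
    (hvar : ∫ ω, ‖a 0 0 ω‖ ^ 2 ∂P = 1)
    (n k : ℕ) (hk : 1 ≤ k) (hkn : k ≤ n) :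
    (∫ ω, ‖Pcoef a n k ω‖ ^ 2 ∂P
        = ((n : ℝ)⁻¹) ^ k * ((Nat.factorial n : ℝ) / (Nat.factorial (n - k) : ℝ))) ∧
    (((n : ℝ)⁻¹) ^ k * ((Nat.factorial n : ℝ) / (Nat.factorial (n - k) : ℝ)) ≤ 1) ∧
    (∀ l : ℕ, k ≠ l → ∫ ω, Pcoef a n k ω * (starRingEnd ℂ) (Pcoef a n l ω) ∂P = 0) := by
  classical
  have main := fun k' l' => PcoefAux.Pcoef_mul_conj_integral (P := P) a hmeas hindep hident
    hL2 hmean hvar n k' l'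
  -- the cross moments
  have cross : ∀ l : ℕ, k ≠ l →
      ∫ ω, Pcoef a n k ω * (starRingEnd ℂ) (Pcoef a n l ω) ∂P = 0 := by
    intro l hkl
    rw [main k l]
    refine Finset.sum_eq_zero fun I hI => Finset.sum_eq_zero fun J hJ =>
      Finset.sum_eq_zero fun σ _ => Finset.sum_eq_zero fun τ _ => ?_
    rw [if_neg, mul_zero]
    intro h
    have h1 := PcoefAux.posSet_card I σ
    have h2 := PcoefAux.posSet_card J τ
    rw [(Finset.mem_powersetCard.mp hI).2] at h1
    rw [(Finset.mem_powersetCard.mp hJ).2] at h2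
    rw [h] at h1
    exact hkl (h1.symm.trans h2)
  -- the diagonal moment
  have hn1 : 1 ≤ n := hk.trans hkn
  have diag : ∫ ω, Pcoef a n k ω * (starRingEnd ℂ) (Pcoef a n k ω) ∂P
      = ((n.choose k : ℂ) * (k.factorial : ℂ))
        * (((Real.sqrt n : ℂ))⁻¹ ^ k * ((Real.sqrt n : ℂ))⁻¹ ^ k) := by
    rw [main k k]
    have step : ∀ I ∈ Finset.powersetCard k (Finset.univ : Finset (Fin n)),
        (∑ J ∈ Finset.powersetCard k (Finset.univ : Finset (Fin n)),
          ∑ σ : Equiv.Perm ↥I, ∑ τ : Equiv.Perm ↥J,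
            ((((Real.sqrt n)⁻¹ : ℂ) ^ k * ((Equiv.Perm.sign σ : ℤ) : ℂ))
              * (((Real.sqrt n)⁻¹ : ℂ) ^ k * ((Equiv.Perm.sign τ : ℤ) : ℂ)))
            * (if PcoefAux.posSet I σ = PcoefAux.posSet J τ then (1 : ℂ) else 0))
        = (k.factorial : ℂ) * (((Real.sqrt n : ℂ))⁻¹ ^ k * ((Real.sqrt n : ℂ))⁻¹ ^ k) := by
      intro I hI
      rw [Finset.sum_eq_single_of_mem I hI]
      · have inner : ∀ σ : Equiv.Perm ↥I,
            (∑ τ : Equiv.Perm ↥I,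
              ((((Real.sqrt n)⁻¹ : ℂ) ^ k * ((Equiv.Perm.sign σ : ℤ) : ℂ))
                * (((Real.sqrt n)⁻¹ : ℂ) ^ k * ((Equiv.Perm.sign τ : ℤ) : ℂ)))
              * (if PcoefAux.posSet I σ = PcoefAux.posSet I τ then (1 : ℂ) else 0))
            = ((Real.sqrt n : ℂ))⁻¹ ^ k * ((Real.sqrt n : ℂ))⁻¹ ^ k := by
          intro σ
          rw [Finset.sum_eq_single_of_mem σ (Finset.mem_univ σ)]
          · rw [if_pos rfl, mul_one, mul_mul_mul_comm]
            have hs : ((Equiv.Perm.sign σ : ℤ) : ℂ) * ((Equiv.Perm.sign σ : ℤ) : ℂ) = 1 := by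
              rw [← Int.cast_mul, ← Units.val_mul, Int.units_mul_self, Units.val_one,
                Int.cast_one]
            rw [hs, mul_one]
          · intro τ _ hτσ
            rw [if_neg, mul_zero]
            intro h
            exact hτσ (PcoefAux.posSet_eq_perm h).symm
        calc ∑ σ : Equiv.Perm ↥I, _ = ∑ σ : Equiv.Perm ↥I,
              ((Real.sqrt n : ℂ))⁻¹ ^ k * ((Real.sqrt n : ℂ))⁻¹ ^ k :=
              Finset.sum_congr rfl fun σ _ => inner σ
          _ = (k.factorial : ℂ) * (((Real.sqrt n : ℂ))⁻¹ ^ k * ((Real.sqrt n : ℂ))⁻¹ ^ k) := by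
              rw [Finset.sum_const, Finset.card_univ, Fintype.card_perm, Fintype.card_coe,
                (Finset.mem_powersetCard.mp hI).2, nsmul_eq_mul]
      · intro J _ hJI
        refine Finset.sum_eq_zero fun σ _ => Finset.sum_eq_zero fun τ _ => ?_
        rw [if_neg, mul_zero]
        intro h
        exact hJI (PcoefAux.posSet_eq_I h).symm
    calc ∑ I ∈ Finset.powersetCard k (Finset.univ : Finset (Fin n)), _
        = ∑ I ∈ Finset.powersetCard k (Finset.univ : Finset (Fin n)),
            (k.factorial : ℂ) * (((Real.sqrt n : ℂ))⁻¹ ^ k * ((Real.sqrt n : ℂ))⁻¹ ^ k) :=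
          Finset.sum_congr rfl step
      _ = _ := by
          rw [Finset.sum_const, Finset.card_powersetCard, Finset.card_univ, Fintype.card_fin,
            nsmul_eq_mul, ← mul_assoc]
  -- convert to a real statement
  have hmc : ∀ z : ℂ, z * (starRingEnd ℂ) z = ((‖z‖ ^ 2 : ℝ) : ℂ) := fun z => by
    rw [Complex.mul_conj, Complex.normSq_eq_norm_sq]
  have hsqrt : ((Real.sqrt n : ℂ))⁻¹ ^ k * ((Real.sqrt n : ℂ))⁻¹ ^ k
      = ((((n : ℝ)⁻¹) ^ k : ℝ) : ℂ) := by
    rw [← mul_pow, ← mul_inv, ← Complex.ofReal_mul,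
      Real.mul_self_sqrt (Nat.cast_nonneg n)]
    push_cast
    ring
  have hreal : ∫ ω, ‖Pcoef a n k ω‖ ^ 2 ∂P
      = (n.choose k * k.factorial : ℝ) * ((n : ℝ)⁻¹) ^ k := by
    have lhs : ∫ ω, Pcoef a n k ω * (starRingEnd ℂ) (Pcoef a n k ω) ∂P
        = ((∫ ω, ‖Pcoef a n k ω‖ ^ 2 ∂P : ℝ) : ℂ) := by
      rw [integral_congr_ae (Filter.Eventually.of_forall fun ω => hmc (Pcoef a n k ω))]
      exact integral_ofReal
    have rhs : ((n.choose k : ℂ) * (k.factorial : ℂ))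
        * (((Real.sqrt n : ℂ))⁻¹ ^ k * ((Real.sqrt n : ℂ))⁻¹ ^ k)
        = (((n.choose k * k.factorial : ℝ) * ((n : ℝ)⁻¹) ^ k : ℝ) : ℂ) := by
      rw [hsqrt]
      push_cast
      ring
    have := lhs.symm.trans (diag.trans rhs)
    exact_mod_cast this
  have hfac : (n.choose k * k.factorial : ℝ)
      = (Nat.factorial n : ℝ) / (Nat.factorial (n - k) : ℝ) := by
    have h := Nat.choose_mul_factorial_mul_factorial hkn
    rw [eq_div_iff (by exact_mod_cast (Nat.factorial_ne_zero (n - k)))]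
    exact_mod_cast h
  have hdesc : (Nat.factorial n : ℝ) / (Nat.factorial (n - k) : ℝ)
      = (n.descFactorial k : ℝ) := by
    rw [eq_comm, eq_div_iff (by exact_mod_cast (Nat.factorial_ne_zero (n - k))), mul_comm]
    exact_mod_cast Nat.factorial_mul_descFactorial hkn
  have hnpos : (0 : ℝ) < n := by exact_mod_cast Nat.lt_of_lt_of_le Nat.zero_lt_one hn1
  refine ⟨?_, ?_, cross⟩
  · rw [hreal, hfac, mul_comm]
  · rw [hdesc]
    have h1 : (n.descFactorial k : ℝ) ≤ (n : ℝ) ^ k := by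
      exact_mod_cast Nat.descFactorial_le_pow n k
    calc ((n : ℝ)⁻¹) ^ k * (n.descFactorial k : ℝ)
        = (n.descFactorial k : ℝ) / (n : ℝ) ^ k := by rw [inv_pow]; ring
      _ ≤ 1 := by
          rw [div_le_one (by positivity)]
          exact h1


end
end

section
/- For every n ≥ 1 and every z in the open unit disc D, E[|q_n(z)|²] ≤ 1/(1 − |z|²). -/
open MeasureTheory ProbabilityTheory Filter Metric ComplexConjugate

noncomputable section

section Helpers

lemma indep_integral_mul_complex {Ω : Type*} [MeasurableSpace Ω] {P : Measure Ω}
    {f g : Ω → ℂ} (h : IndepFun f g P) (hf : Integrable f P) (hg : Integrable g P) :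
    ∫ ω, f ω * g ω ∂P = (∫ ω, f ω ∂P) * ∫ ω, g ω ∂P := by
  have h11 : IndepFun (fun ω => (f ω).re) (fun ω => (g ω).re) P :=
    h.comp Complex.measurable_re Complex.measurable_re
  have h12 : IndepFun (fun ω => (f ω).re) (fun ω => (g ω).im) P :=
    h.comp Complex.measurable_re Complex.measurable_im
  have h21 : IndepFun (fun ω => (f ω).im) (fun ω => (g ω).re) P :=
    h.comp Complex.measurable_im Complex.measurable_re
  have h22 : IndepFun (fun ω => (f ω).im) (fun ω => (g ω).im) P :=
    h.comp Complex.measurable_im Complex.measurable_im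
  have hfre : Integrable (fun ω => (f ω).re) P := by simpa using hf.re
  have hfim : Integrable (fun ω => (f ω).im) P := by simpa using hf.im
  have hgre : Integrable (fun ω => (g ω).re) P := by simpa using hg.re
  have hgim : Integrable (fun ω => (g ω).im) P := by simpa using hg.im
  have hmul : Integrable (fun ω => f ω * g ω) P := h.integrable_mul hf hg
  have e11 := h11.integral_fun_mul_eq_mul_integral hfre.aestronglyMeasurable hgre.aestronglyMeasurable
  have e12 := h12.integral_fun_mul_eq_mul_integral hfre.aestronglyMeasurable hgim.aestronglyMeasurable
  have e21 := h21.integral_fun_mul_eq_mul_integral hfim.aestronglyMeasurable hgre.aestronglyMeasurable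
  have e22 := h22.integral_fun_mul_eq_mul_integral hfim.aestronglyMeasurable hgim.aestronglyMeasurable
  have hre : (∫ ω, f ω * g ω ∂P).re = ∫ ω, (f ω * g ω).re ∂P := by
    exact (integral_re hmul).symm
  have him : (∫ ω, f ω * g ω ∂P).im = ∫ ω, (f ω * g ω).im ∂P := by
    exact (integral_im hmul).symm
  have hfre' : (∫ ω, f ω ∂P).re = ∫ ω, (f ω).re ∂P := by
    exact (integral_re hf).symm
  have hfim' : (∫ ω, f ω ∂P).im = ∫ ω, (f ω).im ∂P := by
    exact (integral_im hf).symm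
  have hgre' : (∫ ω, g ω ∂P).re = ∫ ω, (g ω).re ∂P := by
    exact (integral_re hg).symm
  have hgim' : (∫ ω, g ω ∂P).im = ∫ ω, (g ω).im ∂P := by
    exact (integral_im hg).symm
  apply Complex.ext
  · rw [hre, Complex.mul_re, hfre', hfim', hgre', hgim', ← e11, ← e22]
    have : ∀ ω, (f ω * g ω).re = (f ω).re * (g ω).re - (f ω).im * (g ω).im := by
      intro ω; exact Complex.mul_re _ _
    simp_rw [this]
    exact integral_sub (h11.integrable_mul hfre hgre) (h22.integrable_mul hfim hgim)
  · rw [him, Complex.mul_im, hfre', hfim', hgre', hgim', ← e12, ← e21]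
    have : ∀ ω, (f ω * g ω).im = (f ω).re * (g ω).im + (f ω).im * (g ω).re := by
      intro ω; exact Complex.mul_im _ _
    simp_rw [this]
    exact integral_add (h12.integrable_mul hfre hgim) (h21.integrable_mul hfim hgre)

lemma memℒp_conj {Ω : Type*} [MeasurableSpace Ω] {P : Measure Ω} {p : ENNReal}
    {f : Ω → ℂ} (hf : MemLp f p P) : MemLp (fun ω => conj (f ω)) p P := by
  refine MemLp.of_le hf (Complex.continuous_conj.comp_aestronglyMeasurable hf.1) ?_
  filter_upwards with ω
  simp

lemma memℒp2_integrable_mul {Ω : Type*} [MeasurableSpace Ω] {P : Measure Ω}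
    {f g : Ω → ℂ} (hf : MemLp f 2 P) (hg : MemLp g 2 P) :
    Integrable (fun ω => f ω * g ω) P := by
  have h := hf.smul (r := 1) hg
  rw [memLp_one_iff_integrable] at h
  exact h.congr (by filter_upwards with ω; simp [smul_eq_mul, mul_comm])

lemma indep_integral_prod {Ω : Type*} [MeasurableSpace Ω] {P : Measure Ω}
    [IsProbabilityMeasure P] {ι : Type*} [DecidableEq ι] {h : ι → Ω → ℂ}
    (hint : ∀ i, Integrable (h i) P)
    (hmul : ∀ (s : Finset ι) (i : ι), i ∉ s →
      IndepFun (fun ω => ∏ j ∈ s, h j ω) (h i) P) :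
    ∀ s : Finset ι, Integrable (fun ω => ∏ j ∈ s, h j ω) P ∧
      ∫ ω, ∏ j ∈ s, h j ω ∂P = ∏ j ∈ s, ∫ ω, h j ω ∂P := by
  intro s
  induction s using Finset.induction_on with
  | empty => simp
  | @insert i s hi ih =>
    have hIndep := hmul s i hi
    have hint1 : Integrable (fun ω => (∏ j ∈ s, h j ω) * h i ω) P :=
      hIndep.integrable_mul ih.1 (hint i)
    constructor
    · refine hint1.congr ?_
      filter_upwards with ω
      rw [Finset.prod_insert hi, mul_comm]
    · have e1 : (fun ω => ∏ j ∈ insert i s, h j ω)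
          = fun ω => (∏ j ∈ s, h j ω) * h i ω := by
        funext ω; rw [Finset.prod_insert hi, mul_comm]
      rw [e1, indep_integral_mul_complex hIndep ih.1 (hint i), ih.2,
        Finset.prod_insert hi, mul_comm]

open Finset in
lemma perm_fix_card (n : ℕ) (S : Finset (Fin n)) :
    (Finset.univ.filter fun σ : Equiv.Perm (Fin n) => ∀ i ∈ S, σ i = i).card
      = Nat.factorial (n - S.card) := by
  classical
  have h1 : (Finset.univ.filter fun σ : Equiv.Perm (Fin n) => ∀ i ∈ S, σ i = i).card
      = Fintype.card {σ : Equiv.Perm (Fin n) // ∀ i ∈ S, σ i = i} := by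
    rw [Fintype.card_subtype]
  rw [h1]
  have e1 : {σ : Equiv.Perm (Fin n) // ∀ i ∈ S, σ i = i}
      ≃ {σ : Equiv.Perm (Fin n) // ∀ a, ¬(a ∉ S) → σ a = a} :=
    Equiv.subtypeEquivRight (by
      intro σ
      constructor
      · intro h a ha; exact h a (not_not.mp ha)
      · intro h a ha; exact h a (not_not.mpr ha))
  have e2 : Equiv.Perm {a : Fin n // a ∉ S} ≃ {σ : Equiv.Perm (Fin n) // ∀ a, ¬(a ∉ S) → σ a = a} :=
    Equiv.Perm.subtypeEquivSubtypePerm (fun a => a ∉ S)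
  rw [Fintype.card_congr (e1.trans e2.symm), Fintype.card_perm]
  congr 1
  rw [Fintype.card_subtype_compl, Fintype.card_fin, Fintype.card_coe]

open Finset in
lemma geom_partial_le {x : ℝ} (hx0 : 0 ≤ x) (hx1 : x < 1) (m : ℕ) :
    ∑ j ∈ range m, x ^ j ≤ 1 / (1 - x) := by
  have h1 : 0 < 1 - x := by linarith
  rw [geom_sum_eq (ne_of_lt hx1) m]
  have h2 : (x ^ m - 1) / (x - 1) = (1 - x ^ m) / (1 - x) := by
    rw [← neg_sub 1 (x^m), ← neg_sub 1 x, neg_div_neg_eq]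
  rw [h2, div_le_div_iff₀ h1 h1, one_mul]
  have h3 : 0 ≤ x ^ m := pow_nonneg hx0 m
  nlinarith

open Finset in
lemma perm_sum_bound (n : ℕ) (x : ℝ) (hx0 : 0 ≤ x) (hx1 : x < 1) :
    ∑ σ : Equiv.Perm (Fin n), ∏ i : Fin n, ((if σ i = i then (1:ℝ) else 0) + x / n)
      ≤ 1 / (1 - x) := by
  classical
  rcases Nat.eq_zero_or_pos n with rfl | hn
  · calc ∑ σ : Equiv.Perm (Fin 0), ∏ i : Fin 0, ((if σ i = i then (1:ℝ) else 0) + x / 0)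
        = ∑ _σ : Equiv.Perm (Fin 0), (1:ℝ) := by simp
      _ = 1 := by simp [Fintype.card_perm]
      _ ≤ 1/(1-x) := by rw [le_div_iff₀ (by linarith)]; nlinarith
  have hnR : (0:ℝ) < n := by exact_mod_cast hn
  have step1 : ∀ σ : Equiv.Perm (Fin n),
      ∏ i : Fin n, ((if σ i = i then (1:ℝ) else 0) + x / n)
        = ∑ S ∈ (univ : Finset (Fin n)).powerset,
            (if ∀ i ∈ S, σ i = i then (1:ℝ) else 0) * (x / n) ^ (n - S.card) := by
    intro σ
    rw [Finset.prod_add]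
    refine Finset.sum_congr rfl fun S hS => ?_
    rw [Finset.prod_boole, Finset.prod_const]
    congr 2
    rw [Finset.card_sdiff_of_subset (Finset.mem_powerset.mp hS), Finset.card_univ, Fintype.card_fin]
  calc ∑ σ : Equiv.Perm (Fin n), ∏ i : Fin n, ((if σ i = i then (1:ℝ) else 0) + x / n)
      = ∑ S ∈ (univ : Finset (Fin n)).powerset,
          (Nat.factorial (n - S.card) : ℝ) * (x / n) ^ (n - S.card) := by
        simp_rw [step1]
        rw [Finset.sum_comm]
        refine Finset.sum_congr rfl fun S _ => ?_
        rw [← Finset.sum_mul, Finset.sum_boole, perm_fix_card]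
    _ = ∑ k ∈ range (n + 1), (n.choose k : ℝ) * ((Nat.factorial (n - k) : ℝ) * (x / n) ^ (n - k)) := by
        rw [Finset.sum_powerset_apply_card (fun k => (Nat.factorial (n - k) : ℝ) * (x / n) ^ (n - k))]
        simp [Finset.card_univ, nsmul_eq_mul]
    _ = ∑ j ∈ range (n + 1), (n.choose (n - j) : ℝ) * ((Nat.factorial (n - (n-j)) : ℝ) * (x / n) ^ (n - (n-j))) := by
        rw [← Finset.sum_range_reflect]
        simp
    _ ≤ ∑ j ∈ range (n + 1), x ^ j := by
        refine Finset.sum_le_sum fun j hj => ?_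
        have hjn : j ≤ n := Nat.lt_succ_iff.mp (Finset.mem_range.mp hj)
        rw [Nat.sub_sub_self hjn, Nat.choose_symm hjn]
        have hd : (n.choose j : ℝ) * (Nat.factorial j : ℝ) = (n.descFactorial j : ℝ) := by
          rw [Nat.descFactorial_eq_factorial_mul_choose]
          push_cast; ring
        rw [div_pow, ← mul_assoc, hd]
        have h2 : (n.descFactorial j : ℝ) ≤ (n:ℝ) ^ j := by
          exact_mod_cast Nat.descFactorial_le_pow n j
        calc (n.descFactorial j : ℝ) * (x ^ j / (n:ℝ) ^ j)
            ≤ (n:ℝ)^j * (x ^ j / (n:ℝ)^j) := by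
              apply mul_le_mul_of_nonneg_right h2
              positivity
          _ = x ^ j := by field_simp
    _ ≤ 1 / (1 - x) := geom_partial_le hx0 hx1 _

end Helpers

/-- The `n × n` matrix whose `(i,j)` entry is `a i j ω`. -/
def entryMatrix {Ω : Type*} (a : ℕ → ℕ → Ω → ℂ) (n : ℕ) (ω : Ω) :
    Matrix (Fin n) (Fin n) ℂ :=
  Matrix.of fun i j : Fin n => a i.1 j.1 ω

/-- **Uniform second moment bound for `qₙ`**: for i.i.d. entries with mean `0` and variance
`1`, for every `n ≥ 1` and every `z` in the open unit disc,
`E[|qₙ(z)|²] ≤ 1/(1 - |z|²)`, where `qₙ(z) = det(1 - z Aₙ/√n)`. -/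
theorem qn_second_moment_bound
    {Ω : Type*} [MeasurableSpace Ω] (P : Measure Ω) [IsProbabilityMeasure P]
    (a : ℕ → ℕ → Ω → ℂ)
    (hmeas : ∀ i j, Measurable (a i j))
    (hindep : iIndepFun (fun p : ℕ × ℕ => a p.1 p.2) P)
    (hident : ∀ i j, IdentDistrib (a i j) (a 0 0) P P)
    (hL2 : MemLp (a 0 0) 2 P)
    (hmean : ∫ ω, a 0 0 ω ∂P = 0)
    (hvar : ∫ ω, ‖a 0 0 ω‖ ^ 2 ∂P = 1)
    (n : ℕ) (hn : 1 ≤ n) (z : ℂ) (hz : z ∈ ball (0 : ℂ) 1) :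
    ∫ ω, ‖(1 - z • (((Real.sqrt n)⁻¹ : ℂ) • entryMatrix a n ω)).det‖ ^ 2 ∂P
      ≤ 1 / (1 - ‖z‖ ^ 2) := by
  classical
  simp_rw [smul_smul]
  set t : ℂ := z * ((Real.sqrt n)⁻¹ : ℂ) with ht
  -- basic L² facts about the entries
  have hmem2 : ∀ p q : ℕ, MemLp (a p q) 2 P := fun p q => (hident p q).symm.memLp_snd hL2
  have hint1 : ∀ p q : ℕ, Integrable (a p q) P := fun p q =>
    (hmem2 p q).integrable one_le_two
  have hmean' : ∀ p q : ℕ, ∫ ω, a p q ω ∂P = 0 := fun p q =>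
    ((hident p q).integral_eq).trans hmean
  have hvar' : ∀ p q : ℕ, ∫ ω, ‖a p q ω‖ ^ 2 ∂P = 1 := fun p q =>
    (((hident p q).comp (measurable_norm.pow_const 2)).integral_eq).trans hvar
  have hconj_mean : ∀ p q : ℕ, ∫ ω, conj (a p q ω) ∂P = 0 := by
    intro p q; rw [integral_conj, hmean' p q, map_zero]
  have hsq_int : ∀ p q : ℕ, Integrable (fun ω => a p q ω * conj (a p q ω)) P := fun p q =>
    memℒp2_integrable_mul (hmem2 p q) (memℒp_conj (hmem2 p q))
  have hsq_eq : ∀ p q : ℕ, ∫ ω, a p q ω * conj (a p q ω) ∂P = 1 := by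
    intro p q
    have hpt : ∀ ω, a p q ω * conj (a p q ω) = ((‖a p q ω‖ ^ 2 : ℝ) : ℂ) := by
      intro ω
      rw [Complex.mul_conj, Complex.normSq_eq_norm_sq]
    simp_rw [hpt]
    rw [integral_complex_ofReal, hvar' p q, Complex.ofReal_one]
  -- the entries of the random matrix
  set d : Fin n → Fin n → ℂ := fun p q => if p = q then 1 else 0 with hd
  set b : Fin n → Fin n → Ω → ℂ := fun p q ω => d p q - t * a p.1 q.1 ω with hb
  have hdconj : ∀ p q : Fin n, conj (d p q) = d p q := by
    intro p q; simp [hd, apply_ite (starRingEnd ℂ)]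
  have hbmem : ∀ p q : Fin n, MemLp (b p q) 2 P := fun p q =>
    (memLp_const (d p q)).sub ((hmem2 p.1 q.1).const_mul t)
  have hbint : ∀ p q : Fin n, Integrable (b p q) P := fun p q =>
    (hbmem p q).integrable one_le_two
  have hbint_eq : ∀ p q : Fin n, ∫ ω, b p q ω ∂P = d p q := by
    intro p q
    simp only [hb]
    rw [integral_sub (integrable_const _) ((hint1 p.1 q.1).const_mul t),
      integral_const_mul, hmean' p.1 q.1, mul_zero, sub_zero, integral_const]
    simp
  have hbconj_eq : ∀ p q : Fin n, ∫ ω, conj (b p q ω) ∂P = d p q := by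
    intro p q; rw [integral_conj, hbint_eq p q, hdconj]
  -- second moment of a single entry
  have hbb : ∀ p q : Fin n, ∫ ω, b p q ω * conj (b p q ω) ∂P
      = d p q * d p q + ((‖t‖ ^ 2 : ℝ) : ℂ) := by
    intro p q
    have hexp : ∀ ω, b p q ω * conj (b p q ω)
        = (d p q * conj (d p q) - d p q * (conj t * conj (a p.1 q.1 ω)))
          - (conj (d p q) * (t * a p.1 q.1 ω)
              - (t * conj t) * (a p.1 q.1 ω * conj (a p.1 q.1 ω))) := by
      intro ω
      simp only [hb, map_sub, map_mul]
      ring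
    simp_rw [hexp]
    have i1 : Integrable (fun ω => d p q * conj (d p q)
        - d p q * (conj t * conj (a p.1 q.1 ω))) P :=
      (integrable_const _).sub ((((memℒp_conj (hmem2 p.1 q.1)).integrable
        one_le_two).const_mul (conj t)).const_mul (d p q))
    have i2 : Integrable (fun ω => conj (d p q) * (t * a p.1 q.1 ω)
        - (t * conj t) * (a p.1 q.1 ω * conj (a p.1 q.1 ω))) P :=
      (((hint1 p.1 q.1).const_mul t).const_mul (conj (d p q))).sub
        ((hsq_int p.1 q.1).const_mul (t * conj t))
    have e2 : ∫ ω, d p q * (conj t * conj (a p.1 q.1 ω)) ∂P = 0 := by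
      rw [integral_const_mul, integral_const_mul, hconj_mean p.1 q.1]
      ring
    have e3 : ∫ ω, conj (d p q) * (t * a p.1 q.1 ω) ∂P = 0 := by
      rw [integral_const_mul, integral_const_mul, hmean' p.1 q.1]
      ring
    have e4 : ∫ ω, (t * conj t) * (a p.1 q.1 ω * conj (a p.1 q.1 ω)) ∂P = t * conj t := by
      rw [integral_const_mul, hsq_eq p.1 q.1, mul_one]
    rw [integral_sub i1 i2,
      integral_sub (integrable_const _) ((((memℒp_conj (hmem2 p.1 q.1)).integrable
        one_le_two).const_mul (conj t)).const_mul (d p q)),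
      integral_sub (((hint1 p.1 q.1).const_mul t).const_mul (conj (d p q)))
        ((hsq_int p.1 q.1).const_mul (t * conj t)),
      e2, e3, e4, integral_const]
    have htt : t * conj t = ((‖t‖ ^ 2 : ℝ) : ℂ) := by
      rw [Complex.mul_conj, Complex.normSq_eq_norm_sq]
    simp [hdconj p q, htt]
  -- the per-column factors
  set hfun : Equiv.Perm (Fin n) → Equiv.Perm (Fin n) → Fin n → Ω → ℂ :=
    fun σ τ i ω => b (σ i) i ω * conj (b (τ i) i ω) with hhfun
  have hfint : ∀ σ τ (i : Fin n), Integrable (hfun σ τ i) P := fun σ τ i =>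
    memℒp2_integrable_mul (hbmem _ _) (memℒp_conj (hbmem _ _))
  -- value of the integral of a single factor
  have hval : ∀ σ τ (i : Fin n), ∫ ω, hfun σ τ i ω ∂P
      = d (σ i) i * d (τ i) i + (if σ i = τ i then ((‖t‖ ^ 2 : ℝ) : ℂ) else 0) := by
    intro σ τ i
    by_cases hcase : σ i = τ i
    · rw [if_pos hcase]
      have : hfun σ τ i = fun ω => b (σ i) i ω * conj (b (σ i) i ω) := by
        simp only [hhfun, hcase]
      rw [this, hbb (σ i) i, hcase]
    · rw [if_neg hcase, add_zero]
      have hne : ((σ i : ℕ), (i : ℕ)) ≠ ((τ i : ℕ), (i : ℕ)) := by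
        intro hcon
        exact hcase (Fin.ext (congrArg Prod.fst hcon))
      have hpair : IndepFun (a (σ i : ℕ) (i : ℕ)) (a (τ i : ℕ) (i : ℕ)) P :=
        hindep.indepFun hne
      have hIndep : IndepFun (b (σ i) i) (fun ω => conj (b (τ i) i ω)) P := by
        have := hpair.comp
          (φ := fun w : ℂ => d (σ i) i - t * w)
          (ψ := fun w : ℂ => conj (d (τ i) i - t * w))
          (measurable_const.sub (measurable_id.const_mul t))
          (Complex.continuous_conj.measurable.comp
            (measurable_const.sub (measurable_id.const_mul t)))
        exact this
      have := indep_integral_mul_complex hIndep (hbint (σ i) i)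
        ((memℒp_conj (hbmem (τ i) i)).integrable one_le_two)
      rw [hhfun]
      simp only []
      rw [this, hbint_eq (σ i) i, hbconj_eq (τ i) i]
  -- independence of the per-column factors
  have hprod_indep : ∀ σ τ : Equiv.Perm (Fin n), ∀ (s : Finset (Fin n)) (i : Fin n), i ∉ s →
      IndepFun (fun ω => ∏ j ∈ s, hfun σ τ j ω) (hfun σ τ i) P := by
    intro σ τ s i hi
    set S : Finset (ℕ × ℕ) :=
      s.biUnion (fun j => {((σ j : ℕ), (j : ℕ)), ((τ j : ℕ), (j : ℕ))}) with hS
    set T : Finset (ℕ × ℕ) := {((σ i : ℕ), (i : ℕ)), ((τ i : ℕ), (i : ℕ))} with hT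
    have hdisj : Disjoint S T := by
      rw [Finset.disjoint_left]
      intro p hpS hpT
      simp only [hS, Finset.mem_biUnion, Finset.mem_insert, Finset.mem_singleton] at hpS
      simp only [hT, Finset.mem_insert, Finset.mem_singleton] at hpT
      obtain ⟨j, hjs, hj⟩ := hpS
      have h2 : p.2 = (j : ℕ) := by rcases hj with h | h <;> subst h <;> rfl
      have h3 : p.2 = (i : ℕ) := by rcases hpT with h | h <;> subst h <;> rfl
      have hji : (j : ℕ) = (i : ℕ) := by rw [← h2, h3]
      exact hi (Fin.ext hji ▸ hjs)
    have base := hindep.indepFun_finset S T hdisj (fun p => hmeas p.1 p.2)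
    have hmemS1 : ∀ j : {x // x ∈ s}, ((σ j.1 : ℕ), (j.1 : ℕ)) ∈ S := by
      intro j
      exact Finset.mem_biUnion.mpr ⟨j.1, j.2, Finset.mem_insert_self _ _⟩
    have hmemS2 : ∀ j : {x // x ∈ s}, ((τ j.1 : ℕ), (j.1 : ℕ)) ∈ S := by
      intro j
      exact Finset.mem_biUnion.mpr
        ⟨j.1, j.2, Finset.mem_insert_of_mem (Finset.mem_singleton_self _)⟩
    set φS : ({x // x ∈ S} → ℂ) → ℂ := fun v =>
      ∏ j ∈ s.attach, ((d (σ j.1) j.1 - t * v ⟨_, hmemS1 j⟩)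
        * conj (d (τ j.1) j.1 - t * v ⟨_, hmemS2 j⟩)) with hφS
    set φT : ({x // x ∈ T} → ℂ) → ℂ := fun v =>
      (d (σ i) i - t * v ⟨((σ i : ℕ), (i : ℕ)), Finset.mem_insert_self _ _⟩) *
        conj (d (τ i) i - t * v ⟨((τ i : ℕ), (i : ℕ)),
          Finset.mem_insert_of_mem (Finset.mem_singleton_self _)⟩) with hφT
    have hφSm : Measurable φS := by
      rw [hφS]
      refine Finset.measurable_prod s.attach fun j _ => Measurable.mul ?_ ?_
      · exact measurable_const.sub (by fun_prop)
      · exact Complex.continuous_conj.measurable.comp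
          (measurable_const.sub (by fun_prop))
    have hφTm : Measurable φT := by
      rw [hφT]
      refine Measurable.mul ?_ ?_
      · exact measurable_const.sub (by fun_prop)
      · exact Complex.continuous_conj.measurable.comp
          (measurable_const.sub (by fun_prop))
    have heqS : (fun ω => ∏ j ∈ s, hfun σ τ j ω)
        = φS ∘ (fun ω (p : {x // x ∈ S}) => a p.1.1 p.1.2 ω) := by
      funext ω
      simp only [Function.comp_apply, hφS]
      rw [← Finset.prod_attach s (fun j => hfun σ τ j ω)]
    have heqT : hfun σ τ i = φT ∘ (fun ω (p : {x // x ∈ T}) => a p.1.1 p.1.2 ω) := rfl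
    rw [heqS, heqT]
    exact base.comp hφSm hφTm
  have hprod := fun σ τ : Equiv.Perm (Fin n) =>
    indep_integral_prod (hfint σ τ) (hprod_indep σ τ)
  -- pointwise expansion of |det|²
  have hM : ∀ ω : Ω, (1 - t • entryMatrix a n ω) = Matrix.of (fun p q => b p q ω) := by
    intro ω
    ext p q
    simp [hb, hd, Matrix.sub_apply, Matrix.one_apply, entryMatrix, smul_eq_mul]
  have hQ : ∀ ω : Ω, (1 - t • entryMatrix a n ω).det * conj ((1 - t • entryMatrix a n ω).det)
      = ∑ σ : Equiv.Perm (Fin n), ∑ τ : Equiv.Perm (Fin n),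
          (((Equiv.Perm.sign σ : ℤ) : ℂ) * conj ((Equiv.Perm.sign τ : ℤ) : ℂ))
            * ∏ i : Fin n, hfun σ τ i ω := by
    intro ω
    rw [hM ω, Matrix.det_apply', map_sum, Finset.sum_mul_sum]
    refine Finset.sum_congr rfl fun σ _ => Finset.sum_congr rfl fun τ _ => ?_
    rw [map_mul, map_prod]
    have : (∏ i : Fin n, hfun σ τ i ω)
        = (∏ i : Fin n, Matrix.of (fun p q => b p q ω) (σ i) i)
          * ∏ i : Fin n, conj (Matrix.of (fun p q => b p q ω) (τ i) i) := by
      rw [← Finset.prod_mul_distrib]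
      rfl
    rw [this]
    ring
  -- integrate
  have hintegral : ∫ ω, (1 - t • entryMatrix a n ω).det
        * conj ((1 - t • entryMatrix a n ω).det) ∂P
      = ∑ σ : Equiv.Perm (Fin n), ∑ τ : Equiv.Perm (Fin n),
          (((Equiv.Perm.sign σ : ℤ) : ℂ) * conj ((Equiv.Perm.sign τ : ℤ) : ℂ))
            * ∏ i : Fin n, ∫ ω, hfun σ τ i ω ∂P := by
    rw [show (fun ω => (1 - t • entryMatrix a n ω).det
        * conj ((1 - t • entryMatrix a n ω).det))
      = fun ω => ∑ σ : Equiv.Perm (Fin n), ∑ τ : Equiv.Perm (Fin n),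
          (((Equiv.Perm.sign σ : ℤ) : ℂ) * conj ((Equiv.Perm.sign τ : ℤ) : ℂ))
            * ∏ i : Fin n, hfun σ τ i ω from funext hQ]
    rw [integral_finset_sum _ (fun σ _ => integrable_finset_sum _
      (fun τ _ => ((hprod σ τ Finset.univ).1.const_mul _)))]
    refine Finset.sum_congr rfl fun σ _ => ?_
    rw [integral_finset_sum _ (fun τ _ => ((hprod σ τ Finset.univ).1.const_mul _))]
    refine Finset.sum_congr rfl fun τ _ => ?_
    rw [integral_const_mul, (hprod σ τ Finset.univ).2]
  -- off-diagonal terms vanish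
  have hoff : ∀ σ τ : Equiv.Perm (Fin n), σ ≠ τ →
      (∏ i : Fin n, ∫ ω, hfun σ τ i ω ∂P) = 0 := by
    intro σ τ hne
    obtain ⟨i, hi⟩ : ∃ i, σ i ≠ τ i := by
      by_contra hcon
      push_neg at hcon
      exact hne (Equiv.ext hcon)
    refine Finset.prod_eq_zero (Finset.mem_univ i) ?_
    rw [hval σ τ i, if_neg hi, add_zero]
    rcases eq_or_ne (σ i) i with h1 | h1
    · have h2 : τ i ≠ i := fun hcon => hi (h1.trans hcon.symm)
      simp [hd, h1, h2]
    · simp [hd, h1]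
  -- diagonal terms
  have hsgn : ∀ σ : Equiv.Perm (Fin n),
      ((Equiv.Perm.sign σ : ℤ) : ℂ) * conj ((Equiv.Perm.sign σ : ℤ) : ℂ) = 1 := by
    intro σ
    rw [map_intCast (starRingEnd ℂ) ((Equiv.Perm.sign σ : ℤ)), ← Int.cast_mul,
      ← Units.val_mul, Int.units_mul_self]
    simp
  have hdd : ∀ p q : Fin n, d p q * d p q = d p q := by
    intro p q
    simp only [hd]
    split_ifs <;> norm_num
  have hdiag : ∑ σ : Equiv.Perm (Fin n), ∑ τ : Equiv.Perm (Fin n),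
        (((Equiv.Perm.sign σ : ℤ) : ℂ) * conj ((Equiv.Perm.sign τ : ℤ) : ℂ))
          * ∏ i : Fin n, ∫ ω, hfun σ τ i ω ∂P
      = ∑ σ : Equiv.Perm (Fin n), ∏ i : Fin n, (d (σ i) i + ((‖t‖ ^ 2 : ℝ) : ℂ)) := by
    refine Finset.sum_congr rfl fun σ _ => ?_
    rw [Finset.sum_eq_single σ]
    · rw [hsgn σ, one_mul]
      refine Finset.prod_congr rfl fun i _ => ?_
      rw [hval σ σ i, if_pos rfl, hdd]
    · intro τ _ hτ
      rw [hoff σ τ (Ne.symm hτ), mul_zero]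
    · intro hcon
      exact absurd (Finset.mem_univ σ) hcon
  -- convert to a real identity
  have hreal : ∑ σ : Equiv.Perm (Fin n), ∏ i : Fin n, (d (σ i) i + ((‖t‖ ^ 2 : ℝ) : ℂ))
      = (((∑ σ : Equiv.Perm (Fin n), ∏ i : Fin n,
          ((if σ i = i then (1:ℝ) else 0) + ‖t‖ ^ 2)) : ℝ) : ℂ) := by
    rw [Complex.ofReal_sum]
    refine Finset.sum_congr rfl fun σ _ => ?_
    rw [Complex.ofReal_prod]
    refine Finset.prod_congr rfl fun i _ => ?_
    rw [Complex.ofReal_add]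
    congr 1
    simp [hd, apply_ite (fun x : ℝ => (x : ℂ))]
  have hofreal : ∫ ω, (1 - t • entryMatrix a n ω).det
        * conj ((1 - t • entryMatrix a n ω).det) ∂P
      = ((∫ ω, ‖(1 - t • entryMatrix a n ω).det‖ ^ 2 ∂P : ℝ) : ℂ) := by
    rw [← integral_complex_ofReal]
    refine integral_congr_ae (Filter.Eventually.of_forall fun ω => ?_)
    simp only [Complex.mul_conj]
    norm_cast
    rw [Complex.normSq_eq_norm_sq]
  have hkey : ∫ ω, ‖(1 - t • entryMatrix a n ω).det‖ ^ 2 ∂P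
      = ∑ σ : Equiv.Perm (Fin n), ∏ i : Fin n,
          ((if σ i = i then (1:ℝ) else 0) + ‖t‖ ^ 2) := by
    have := hofreal.symm.trans (hintegral.trans (hdiag.trans hreal))
    exact_mod_cast this
  -- compute ‖t‖²
  have hnpos : (0:ℝ) < n := by exact_mod_cast hn
  have htn : ‖t‖ ^ 2 = ‖z‖ ^ 2 / n := by
    rw [ht, norm_mul, norm_inv, Complex.norm_real, Real.norm_eq_abs,
      abs_of_nonneg (Real.sqrt_nonneg _), mul_pow, inv_pow,
      Real.sq_sqrt (le_of_lt hnpos)]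
    ring
  rw [hkey, htn]
  have hz1 : ‖z‖ < 1 := by simpa using mem_ball_zero_iff.mp hz
  exact perm_sum_bound n (‖z‖ ^ 2) (by positivity)
    (pow_lt_one₀ (norm_nonneg z) hz1 two_ne_zero)

end
end

section
/- For every k ≥ 1, every n ≥ k and every M ≥ 1, E[|P_k^{(n,M)} − P_k^{(n)}|²] ≤ E[|a_{11}^{(M)}·a_{12}^{(M)}·⋯·a_{1k}^{(M)} − a_{11}·a_{12}·⋯·a_{1k}|²]; moreover this bound tends to 0 as M → ∞. -/
open MeasureTheory ProbabilityTheory Filter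
open scoped ComplexConjugate ENNReal Topology

noncomputable section

/-- The truncated entry `a^{(M)} = a 1_{|a| < M} - E[a 1_{|a| < M}]`. -/
def trunc {Ω : Type*} [MeasurableSpace Ω] (P : Measure Ω) (a : ℕ → ℕ → Ω → ℂ) (M : ℝ)
    (i j : ℕ) (ω : Ω) : ℂ :=
  (if ‖a i j ω‖ < M then a i j ω else 0)
    - ∫ ω', (if ‖a i j ω'‖ < M then a i j ω' else 0) ∂P


set_option linter.unusedSectionVars false
set_option linter.unusedVariables false
set_option linter.unnecessarySimpa false
set_option maxHeartbeats 1000000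

section Aux


variable {Ω : Type*} [MeasurableSpace Ω] {P : Measure Ω} [IsProbabilityMeasure P]

/-- product of two L² functions is integrable -/
lemma myL2mul {X Y : Ω → ℂ} (hX : MemLp X 2 P) (hY : MemLp Y 2 P) :
    Integrable (fun ω => X ω * Y ω) P := by
  have h : (1 : ℝ≥0∞) / 1 = 1 / 2 + 1 / 2 := by
    rw [one_div_one]
    exact (ENNReal.add_halves 1).symm
  have := hY.smul (φ := X) (r := 1) hX
  exact memLp_one_iff_integrable.mp (by simpa [smul_eq_mul, Pi.mul_def] using this)

lemma myconjL2 {Y : Ω → ℂ} (hY : MemLp Y 2 P) : MemLp (fun ω => conj (Y ω)) 2 P := by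
  refine MemLp.of_le hY ?_ (Eventually.of_forall fun x => ?_)
  · exact (Complex.continuous_conj.comp_aestronglyMeasurable hY.1)
  · simp

lemma myIndepMul {X Y : Ω → ℂ} (hXY : IndepFun X Y P) (hX : Measurable X) (hY : Measurable Y) :
    ∫ ω, X ω * Y ω ∂P = (∫ ω, X ω ∂P) * ∫ ω, Y ω ∂P := by
  have hmap : P.map (fun ω => (X ω, Y ω)) = (P.map X).prod (P.map Y) :=
    (indepFun_iff_map_prod_eq_prod_map_map hX.aemeasurable hY.aemeasurable).mp hXY
  have : IsProbabilityMeasure (P.map X) := Measure.isProbabilityMeasure_map hX.aemeasurable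
  have : IsProbabilityMeasure (P.map Y) := Measure.isProbabilityMeasure_map hY.aemeasurable
  calc ∫ ω, X ω * Y ω ∂P
      = ∫ p : ℂ × ℂ, p.1 * p.2 ∂(P.map (fun ω => (X ω, Y ω))) := by
        rw [integral_map (f := fun p : ℂ × ℂ => p.1 * p.2) (hX.prodMk hY).aemeasurable
          (measurable_fst.mul measurable_snd).aestronglyMeasurable]
    _ = (∫ x, x ∂(P.map X)) * ∫ y, y ∂(P.map Y) := by
        rw [hmap]; exact integral_prod_mul (fun x => x) (fun y => y)
    _ = (∫ ω, X ω ∂P) * ∫ ω, Y ω ∂P := by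
        rw [show (∫ x, x ∂(P.map X)) = ∫ ω, X ω ∂P from
              integral_map hX.aemeasurable aestronglyMeasurable_id,
            show (∫ y, y ∂(P.map Y)) = ∫ ω, Y ω ∂P from
              integral_map hY.aemeasurable aestronglyMeasurable_id]

/-- integral of a product of independent complex random variables -/
lemma myProdIndep {ι : Type*} {g : ι → Ω → ℂ}
    (hind : iIndepFun g P)
    (hm : ∀ i, Measurable (g i)) (hint : ∀ i, Integrable (g i) P) (s : Finset ι) :
    Integrable (fun ω => ∏ i ∈ s, g i ω) P ∧
      (∫ ω, ∏ i ∈ s, g i ω ∂P) = ∏ i ∈ s, ∫ ω, g i ω ∂P := by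
  classical
  induction s using Finset.induction_on with
  | empty => simp
  | @insert i s hi ih =>
    have hIndep : IndepFun (fun ω => ∏ j ∈ s, g j ω) (g i) P := by
      have h := hind.indepFun_finsetProd_of_notMem hm hi
      simpa [Finset.prod_fn] using h
    have hInt : Integrable (fun ω => g i ω * ∏ j ∈ s, g j ω) P :=
      IndepFun.integrable_mul (X := g i) (Y := fun ω => ∏ j ∈ s, g j ω) hIndep.symm (hint i) ih.1
    constructor
    · simpa [Finset.prod_insert hi] using hInt
    · have hmprod : Measurable (fun ω => ∏ j ∈ s, g j ω) := by
        exact Finset.measurable_prod s (fun j _ => hm j)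
      have := myIndepMul hIndep.symm (hm i) hmprod
      simp only [Finset.prod_insert hi]
      rw [this, ih.2]

end Aux

section Master
variable {Ω : Type*} [MeasurableSpace Ω] {P : Measure Ω} [IsProbabilityMeasure P]

lemma myMaster {a : ℕ → ℕ → Ω → ℂ} (hmeas : ∀ i j, Measurable (a i j))
    (hindep : iIndepFun (fun p : ℕ × ℕ => a p.1 p.2) P)
    (hident : ∀ i j, IdentDistrib (a i j) (a 0 0) P P)
    (u v : ℂ → ℂ) (hu : Measurable u) (hv : Measurable v)
    (hu2 : MemLp (fun ω => u (a 0 0 ω)) 2 P) (hv2 : MemLp (fun ω => v (a 0 0 ω)) 2 P)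
    (E E' : Finset (ℕ × ℕ)) :
    Integrable (fun ω => (∏ e ∈ E, u (a e.1 e.2 ω)) *
        (starRingEnd ℂ) (∏ e ∈ E', v (a e.1 e.2 ω))) P ∧
    (∫ ω, (∏ e ∈ E, u (a e.1 e.2 ω)) * (starRingEnd ℂ) (∏ e ∈ E', v (a e.1 e.2 ω)) ∂P)
      = ∏ e ∈ E ∪ E',
          ∫ ω, (if e ∈ E then u (a e.1 e.2 ω) else 1) *
            (starRingEnd ℂ) (if e ∈ E' then v (a e.1 e.2 ω) else 1) ∂P := by
  classical
  have hconj : Measurable fun z : ℂ => (starRingEnd ℂ) z := Complex.continuous_conj.measurable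
  set ψ : ℕ × ℕ → ℂ → ℂ := fun e z =>
    (if e ∈ E then u z else 1) * (starRingEnd ℂ) (if e ∈ E' then v z else 1) with hψdef
  have hψ : ∀ e, Measurable (ψ e) := by
    intro e
    by_cases h1 : e ∈ E <;> by_cases h2 : e ∈ E' <;>
      simp only [hψdef, h1, h2, if_true, if_false] <;> fun_prop
  set g : ℕ × ℕ → Ω → ℂ := fun e ω => ψ e (a e.1 e.2 ω) with hgdef
  have hgind : iIndepFun g P := hindep.comp ψ hψ
  have hgm : ∀ e, Measurable (g e) := fun e => (hψ e).comp (hmeas e.1 e.2)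
  have hmem2 : ∀ (w : ℂ → ℂ), Measurable w → MemLp (fun ω => w (a 0 0 ω)) 2 P →
      ∀ e : ℕ × ℕ, MemLp (fun ω => w (a e.1 e.2 ω)) 2 P := by
    intro w hw hw2 e
    exact (((hident e.1 e.2).comp hw).symm).memLp_snd hw2
  have hXe : ∀ e : ℕ × ℕ, MemLp (fun ω => if e ∈ E then u (a e.1 e.2 ω) else 1) 2 P := by
    intro e
    by_cases h : e ∈ E
    · simpa only [h, if_true] using hmem2 u hu hu2 e
    · simpa only [h, if_false] using memLp_const (1 : ℂ)
  have hYe : ∀ e : ℕ × ℕ, MemLp (fun ω => if e ∈ E' then v (a e.1 e.2 ω) else 1) 2 P := by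
    intro e
    by_cases h : e ∈ E'
    · simpa only [h, if_true] using hmem2 v hv hv2 e
    · simpa only [h, if_false] using memLp_const (1 : ℂ)
  have hgint : ∀ e, Integrable (g e) P := fun e => myL2mul (hXe e) (myconjL2 (hYe e))
  obtain ⟨hint, heq⟩ := myProdIndep hgind hgm hgint (E ∪ E')
  have hω : ∀ ω, (∏ e ∈ E ∪ E', g e ω)
      = (∏ e ∈ E, u (a e.1 e.2 ω)) * (starRingEnd ℂ) (∏ e ∈ E', v (a e.1 e.2 ω)) := by
    intro ω
    have h1 : (∏ e ∈ E ∪ E', g e ω)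
        = (∏ e ∈ E ∪ E', (if e ∈ E then u (a e.1 e.2 ω) else 1)) *
          ∏ e ∈ E ∪ E', (starRingEnd ℂ) (if e ∈ E' then v (a e.1 e.2 ω) else 1) := by
      rw [← Finset.prod_mul_distrib]
    rw [h1, ← map_prod]
    congr 1
    · rw [Finset.prod_ite_mem, Finset.union_inter_cancel_left]
    · rw [Finset.prod_ite_mem, Finset.union_inter_cancel_right]
  constructor
  · exact hint.congr (Eventually.of_forall hω)
  · rw [← integral_congr_ae (Eventually.of_forall fun ω => (hω ω))]
    exact heq

end Master

section DD
variable {Ω : Type*} [MeasurableSpace Ω] {P : Measure Ω} [IsProbabilityMeasure P]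

lemma myDD {a : ℕ → ℕ → Ω → ℂ} (hmeas : ∀ i j, Measurable (a i j))
    (hindep : iIndepFun (fun p : ℕ × ℕ => a p.1 p.2) P)
    (hident : ∀ i j, IdentDistrib (a i j) (a 0 0) P P)
    (hL2 : MemLp (a 0 0) 2 P)
    (hmean : ∫ ω, a 0 0 ω ∂P = 0)
    (tφ : ℂ → ℂ) (htm : Measurable tφ)
    (ht2 : MemLp (fun ω => tφ (a 0 0 ω)) 2 P) (ht0 : ∫ ω, tφ (a 0 0 ω) ∂P = 0)
    {k : ℕ} (E E' : Finset (ℕ × ℕ)) (hE : E.card = k) (hE' : E'.card = k) :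
    Integrable (fun ω => ((∏ e ∈ E, tφ (a e.1 e.2 ω)) - ∏ e ∈ E, a e.1 e.2 ω) *
      (starRingEnd ℂ) ((∏ e ∈ E', tφ (a e.1 e.2 ω)) - ∏ e ∈ E', a e.1 e.2 ω)) P ∧
    (∫ ω, ((∏ e ∈ E, tφ (a e.1 e.2 ω)) - ∏ e ∈ E, a e.1 e.2 ω) *
      (starRingEnd ℂ) ((∏ e ∈ E', tφ (a e.1 e.2 ω)) - ∏ e ∈ E', a e.1 e.2 ω) ∂P)
      = if E = E' then
          (∫ ω, tφ (a 0 0 ω) * (starRingEnd ℂ) (tφ (a 0 0 ω)) ∂P) ^ k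
          - (∫ ω, tφ (a 0 0 ω) * (starRingEnd ℂ) (a 0 0 ω) ∂P) ^ k
          - (∫ ω, a 0 0 ω * (starRingEnd ℂ) (tφ (a 0 0 ω)) ∂P) ^ k
          + (∫ ω, a 0 0 ω * (starRingEnd ℂ) (a 0 0 ω) ∂P) ^ k
        else 0 := by
  classical
  have hconj : Measurable fun z : ℂ => (starRingEnd ℂ) z := Complex.continuous_conj.measurable
  have hidm : Measurable fun z : ℂ => z := measurable_id
  have hid2 : MemLp (fun ω => a 0 0 ω) 2 P := hL2
  -- the four master applications
  have T11 := myMaster hmeas hindep hident tφ tφ htm htm ht2 ht2 E E'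
  have T12 := myMaster hmeas hindep hident tφ (fun z => z) htm hidm ht2 hid2 E E'
  have T21 := myMaster hmeas hindep hident (fun z => z) tφ hidm htm hid2 ht2 E E'
  have T22 := myMaster hmeas hindep hident (fun z => z) (fun z => z) hidm hidm hid2 hid2 E E'
  have hptwise : ∀ ω,
      ((∏ e ∈ E, tφ (a e.1 e.2 ω)) - ∏ e ∈ E, a e.1 e.2 ω) *
        (starRingEnd ℂ) ((∏ e ∈ E', tφ (a e.1 e.2 ω)) - ∏ e ∈ E', a e.1 e.2 ω)
      = (∏ e ∈ E, tφ (a e.1 e.2 ω)) * (starRingEnd ℂ) (∏ e ∈ E', tφ (a e.1 e.2 ω))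
        - (∏ e ∈ E, tφ (a e.1 e.2 ω)) * (starRingEnd ℂ) (∏ e ∈ E', a e.1 e.2 ω)
        - (∏ e ∈ E, a e.1 e.2 ω) * (starRingEnd ℂ) (∏ e ∈ E', tφ (a e.1 e.2 ω))
        + (∏ e ∈ E, a e.1 e.2 ω) * (starRingEnd ℂ) (∏ e ∈ E', a e.1 e.2 ω) := by
    intro ω
    rw [map_sub]
    ring
  have hIntegrable : Integrable (fun ω =>
      ((∏ e ∈ E, tφ (a e.1 e.2 ω)) - ∏ e ∈ E, a e.1 e.2 ω) *
        (starRingEnd ℂ) ((∏ e ∈ E', tφ (a e.1 e.2 ω)) - ∏ e ∈ E', a e.1 e.2 ω)) P := by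
    refine Integrable.congr (((T11.1.sub T12.1).sub T21.1).add T22.1)
      (Eventually.of_forall fun ω => ?_)
    exact (hptwise ω).symm
  refine ⟨hIntegrable, ?_⟩
  have hsplit : (∫ ω, ((∏ e ∈ E, tφ (a e.1 e.2 ω)) - ∏ e ∈ E, a e.1 e.2 ω) *
      (starRingEnd ℂ) ((∏ e ∈ E', tφ (a e.1 e.2 ω)) - ∏ e ∈ E', a e.1 e.2 ω) ∂P)
      = (∫ ω, (∏ e ∈ E, tφ (a e.1 e.2 ω)) * (starRingEnd ℂ) (∏ e ∈ E', tφ (a e.1 e.2 ω)) ∂P)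
        - (∫ ω, (∏ e ∈ E, tφ (a e.1 e.2 ω)) * (starRingEnd ℂ) (∏ e ∈ E', a e.1 e.2 ω) ∂P)
        - (∫ ω, (∏ e ∈ E, a e.1 e.2 ω) * (starRingEnd ℂ) (∏ e ∈ E', tφ (a e.1 e.2 ω)) ∂P)
        + (∫ ω, (∏ e ∈ E, a e.1 e.2 ω) * (starRingEnd ℂ) (∏ e ∈ E', a e.1 e.2 ω) ∂P) := by
    rw [integral_congr_ae (Eventually.of_forall hptwise)]
    have h4 := integral_add ((T11.1.sub T12.1).sub T21.1) T22.1
    have h3 := integral_sub (T11.1.sub T12.1) T21.1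
    have h2 := integral_sub T11.1 T12.1
    simp only [Pi.sub_apply] at h4 h3 h2
    rw [h4, h3, h2]
  rw [hsplit, T11.2, T12.2, T21.2, T22.2]
  -- single-edge identical-distribution reductions
  have hsingle : ∀ (u v : ℂ → ℂ), Measurable u → Measurable v → ∀ e : ℕ × ℕ,
      (∫ ω, u (a e.1 e.2 ω) * (starRingEnd ℂ) (v (a e.1 e.2 ω)) ∂P)
        = ∫ ω, u (a 0 0 ω) * (starRingEnd ℂ) (v (a 0 0 ω)) ∂P := by
    intro u v hu hv e
    have := ((hident e.1 e.2).comp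
      (show Measurable fun z : ℂ => u z * (starRingEnd ℂ) (v z) from
        hu.mul (hconj.comp hv))).integral_eq
    simpa [Function.comp] using this
  have hzero : ∀ (u : ℂ → ℂ), Measurable u → (∫ ω, u (a 0 0 ω) ∂P) = 0 →
      ∀ e : ℕ × ℕ, (∫ ω, u (a e.1 e.2 ω) ∂P) = 0 := by
    intro u hu hu0 e
    have := ((hident e.1 e.2).comp hu).integral_eq
    simpa [Function.comp, hu0] using this
  by_cases hEE : E = E'
  · subst hEE
    rw [if_pos rfl]
    have q11 : (∏ e ∈ E ∪ E, ∫ ω, (if e ∈ E then tφ (a e.1 e.2 ω) else 1) *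
        (starRingEnd ℂ) (if e ∈ E then tφ (a e.1 e.2 ω) else 1) ∂P)
        = (∫ ω, tφ (a 0 0 ω) * (starRingEnd ℂ) (tφ (a 0 0 ω)) ∂P) ^ k := by
      rw [Finset.union_self]
      refine (Finset.prod_congr rfl fun e he => ?_).trans (by rw [Finset.prod_const, hE])
      simp only [he, if_true]
      exact hsingle tφ tφ htm htm e
    have q12 : (∏ e ∈ E ∪ E, ∫ ω, (if e ∈ E then tφ (a e.1 e.2 ω) else 1) *
        (starRingEnd ℂ) (if e ∈ E then a e.1 e.2 ω else 1) ∂P)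
        = (∫ ω, tφ (a 0 0 ω) * (starRingEnd ℂ) (a 0 0 ω) ∂P) ^ k := by
      rw [Finset.union_self]
      refine (Finset.prod_congr rfl fun e he => ?_).trans (by rw [Finset.prod_const, hE])
      simp only [he, if_true]
      exact hsingle tφ (fun z => z) htm hidm e
    have q21 : (∏ e ∈ E ∪ E, ∫ ω, (if e ∈ E then a e.1 e.2 ω else 1) *
        (starRingEnd ℂ) (if e ∈ E then tφ (a e.1 e.2 ω) else 1) ∂P)
        = (∫ ω, a 0 0 ω * (starRingEnd ℂ) (tφ (a 0 0 ω)) ∂P) ^ k := by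
      rw [Finset.union_self]
      refine (Finset.prod_congr rfl fun e he => ?_).trans (by rw [Finset.prod_const, hE])
      simp only [he, if_true]
      exact hsingle (fun z => z) tφ hidm htm e
    have q22 : (∏ e ∈ E ∪ E, ∫ ω, (if e ∈ E then a e.1 e.2 ω else 1) *
        (starRingEnd ℂ) (if e ∈ E then a e.1 e.2 ω else 1) ∂P)
        = (∫ ω, a 0 0 ω * (starRingEnd ℂ) (a 0 0 ω) ∂P) ^ k := by
      rw [Finset.union_self]
      refine (Finset.prod_congr rfl fun e he => ?_).trans (by rw [Finset.prod_const, hE])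
      simp only [he, if_true]
      exact hsingle (fun z => z) (fun z => z) hidm hidm e
    rw [q11, q12, q21, q22]
  · rw [if_neg hEE]
    obtain ⟨e₀, he₀⟩ : (E \ E').Nonempty := by
      rw [Finset.sdiff_nonempty]
      intro hsub
      exact hEE (Finset.eq_of_subset_of_card_le hsub (hE'.trans hE.symm).le)
    obtain ⟨he₀E, he₀E'⟩ := Finset.mem_sdiff.mp he₀
    have hmem : e₀ ∈ E ∪ E' := Finset.mem_union_left _ he₀E
    have z11 : (∏ e ∈ E ∪ E', ∫ ω, (if e ∈ E then tφ (a e.1 e.2 ω) else 1) *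
        (starRingEnd ℂ) (if e ∈ E' then tφ (a e.1 e.2 ω) else 1) ∂P) = 0 := by
      refine Finset.prod_eq_zero hmem ?_
      simp only [he₀E, he₀E', if_true, if_false, map_one, mul_one]
      exact hzero tφ htm ht0 e₀
    have z12 : (∏ e ∈ E ∪ E', ∫ ω, (if e ∈ E then tφ (a e.1 e.2 ω) else 1) *
        (starRingEnd ℂ) (if e ∈ E' then a e.1 e.2 ω else 1) ∂P) = 0 := by
      refine Finset.prod_eq_zero hmem ?_
      simp only [he₀E, he₀E', if_true, if_false, map_one, mul_one]
      exact hzero tφ htm ht0 e₀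
    have z21 : (∏ e ∈ E ∪ E', ∫ ω, (if e ∈ E then a e.1 e.2 ω else 1) *
        (starRingEnd ℂ) (if e ∈ E' then tφ (a e.1 e.2 ω) else 1) ∂P) = 0 := by
      refine Finset.prod_eq_zero hmem ?_
      simp only [he₀E, he₀E', if_true, if_false, map_one, mul_one]
      exact hzero (fun z => z) hidm hmean e₀
    have z22 : (∏ e ∈ E ∪ E', ∫ ω, (if e ∈ E then a e.1 e.2 ω else 1) *
        (starRingEnd ℂ) (if e ∈ E' then a e.1 e.2 ω else 1) ∂P) = 0 := by
      refine Finset.prod_eq_zero hmem ?_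
      simp only [he₀E, he₀E', if_true, if_false, map_one, mul_one]
      exact hzero (fun z => z) hidm hmean e₀
    rw [z11, z12, z21, z22]
    ring

end DD

/-- index set: pairs (I, σ) -/
def myT (n k : ℕ) : Finset (Σ I : Finset (Fin n), Equiv.Perm ↥I) :=
  (Finset.powersetCard k (Finset.univ : Finset (Fin n))).sigma
    (fun I => (Finset.univ : Finset (Equiv.Perm ↥I)))

/-- edge set of a pair (I, σ): the set of matrix positions ((σ i).val, i.val) -/
def myEd {n : ℕ} (p : Σ I : Finset (Fin n), Equiv.Perm ↥I) : Finset (ℕ × ℕ) :=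
  Finset.image (fun i : ↥p.1 => (((p.2 i : ↥p.1) : Fin n).1, ((i : ↥p.1) : Fin n).1))
    Finset.univ

lemma myEd_map_inj {n : ℕ} (p : Σ I : Finset (Fin n), Equiv.Perm ↥I) :
    Function.Injective
      (fun i : ↥p.1 => (((p.2 i : ↥p.1) : Fin n).1, ((i : ↥p.1) : Fin n).1)) := by
  intro i j h
  have h2 := congrArg Prod.snd h
  exact Subtype.ext (Fin.val_injective h2)

lemma myEd_card {n : ℕ} (p : Σ I : Finset (Fin n), Equiv.Perm ↥I) :
    (myEd p).card = p.1.card := by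
  rw [myEd, Finset.card_image_of_injective _ (myEd_map_inj p), Finset.card_univ,
    Fintype.card_coe]

lemma myEd_inj {n : ℕ} {p q : Σ I : Finset (Fin n), Equiv.Perm ↥I}
    (h : myEd p = myEd q) : p = q := by
  obtain ⟨I, σ⟩ := p
  obtain ⟨J, τ⟩ := q
  have hmem : ∀ (K : Finset (Fin n)) (ρ : Equiv.Perm ↥K) (e : ℕ × ℕ),
      e ∈ myEd ⟨K, ρ⟩ ↔ ∃ i : ↥K, (((ρ i : ↥K) : Fin n).1, ((i : ↥K) : Fin n).1) = e := by
    intro K ρ e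
    simp [myEd, eq_comm]
  have hIJ : I = J := by
    ext x
    constructor
    · intro hx
      have : ((σ ⟨x, hx⟩ : ↥I) : Fin n).1 = ((σ ⟨x, hx⟩ : ↥I) : Fin n).1 := rfl
      have hxe : (((σ ⟨x, hx⟩ : ↥I) : Fin n).1, (x : Fin n).1) ∈ myEd ⟨I, σ⟩ :=
        (hmem I σ _).mpr ⟨⟨x, hx⟩, rfl⟩
      rw [h] at hxe
      obtain ⟨j, hj⟩ := (hmem J τ _).mp hxe
      have : ((j : ↥J) : Fin n) = x := Fin.val_injective (congrArg Prod.snd hj)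
      rw [← this]
      exact j.2
    · intro hx
      have hxe : (((τ ⟨x, hx⟩ : ↥J) : Fin n).1, (x : Fin n).1) ∈ myEd ⟨J, τ⟩ :=
        (hmem J τ _).mpr ⟨⟨x, hx⟩, rfl⟩
      rw [← h] at hxe
      obtain ⟨j, hj⟩ := (hmem I σ _).mp hxe
      have : ((j : ↥I) : Fin n) = x := Fin.val_injective (congrArg Prod.snd hj)
      rw [← this]
      exact j.2
  subst hIJ
  have hστ : σ = τ := by
    apply Equiv.ext
    intro i
    have hxe : (((σ i : ↥I) : Fin n).1, ((i : ↥I) : Fin n).1) ∈ myEd ⟨I, σ⟩ :=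
      (hmem I σ _).mpr ⟨i, rfl⟩
    rw [h] at hxe
    obtain ⟨j, hj⟩ := (hmem I τ _).mp hxe
    have hji : j = i := Subtype.ext (Fin.val_injective (congrArg Prod.snd hj))
    subst hji
    exact (Subtype.ext (Fin.val_injective (congrArg Prod.fst hj))).symm
  rw [hστ]

lemma myT_mem_card {n k : ℕ} {p : Σ I : Finset (Fin n), Equiv.Perm ↥I}
    (hp : p ∈ myT n k) : p.1.card = k := by
  rw [myT, Finset.mem_sigma] at hp
  exact (Finset.mem_powersetCard.mp hp.1).2

lemma myT_card (n k : ℕ) : (myT n k).card = n.choose k * k.factorial := by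
  rw [myT, Finset.card_sigma]
  have : ∀ I ∈ Finset.powersetCard k (Finset.univ : Finset (Fin n)),
      (Finset.univ : Finset (Equiv.Perm ↥I)).card = k.factorial := by
    intro I hI
    rw [Finset.card_univ, Fintype.card_perm, Fintype.card_coe,
      (Finset.mem_powersetCard.mp hI).2]
  rw [Finset.sum_congr rfl this, Finset.sum_const, Finset.card_powersetCard,
    Finset.card_univ, Fintype.card_fin, smul_eq_mul]

lemma myPcoefExpand {Ω : Type*} (f : ℕ → ℕ → Ω → ℂ) (n k : ℕ) (ω : Ω) :
    Pcoef f n k ω = ∑ p ∈ myT n k,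
      (((Real.sqrt n)⁻¹ : ℂ) ^ k * ((Equiv.Perm.sign p.2 : ℤ) : ℂ)) *
        ∏ e ∈ myEd p, f e.1 e.2 ω := by
  rw [myT, Finset.sum_sigma, Pcoef]
  refine Finset.sum_congr rfl fun I _ => ?_
  rw [Matrix.det_apply, Finset.mul_sum]
  refine Finset.sum_congr rfl fun σ _ => ?_
  have hprod : (∏ e ∈ myEd ⟨I, σ⟩, f e.1 e.2 ω)
      = ∏ i : ↥I, f ((σ i : ↥I) : Fin n).1 ((i : ↥I) : Fin n).1 ω := by
    rw [myEd, Finset.prod_image (fun i _ j _ h => myEd_map_inj ⟨I, σ⟩ h)]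
  rw [hprod, Units.smul_def, zsmul_eq_mul]
  simp only [Matrix.of_apply]
  ring


def myPhi (M : ℝ) : ℂ → ℂ := fun z => if ‖z‖ < M then z else 0

def myC {Ω : Type*} [MeasurableSpace Ω] (P : Measure Ω) (a : ℕ → ℕ → Ω → ℂ) (M : ℝ) : ℂ :=
  ∫ ω, myPhi M (a 0 0 ω) ∂P

def myTf {Ω : Type*} [MeasurableSpace Ω] (P : Measure Ω) (a : ℕ → ℕ → Ω → ℂ) (M : ℝ) :
    ℂ → ℂ := fun z => myPhi M z - myC P a M

def myAl {Ω : Type*} [MeasurableSpace Ω] (P : Measure Ω) (a : ℕ → ℕ → Ω → ℂ) (M : ℝ) : ℂ :=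
  ∫ ω, myTf P a M (a 0 0 ω) * (starRingEnd ℂ) (myTf P a M (a 0 0 ω)) ∂P

def myGa {Ω : Type*} [MeasurableSpace Ω] (P : Measure Ω) (a : ℕ → ℕ → Ω → ℂ) (M : ℝ) : ℂ :=
  ∫ ω, myTf P a M (a 0 0 ω) * (starRingEnd ℂ) (a 0 0 ω) ∂P

def myGa' {Ω : Type*} [MeasurableSpace Ω] (P : Measure Ω) (a : ℕ → ℕ → Ω → ℂ) (M : ℝ) : ℂ :=
  ∫ ω, a 0 0 ω * (starRingEnd ℂ) (myTf P a M (a 0 0 ω)) ∂P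

def myDe {Ω : Type*} [MeasurableSpace Ω] (P : Measure Ω) (a : ℕ → ℕ → Ω → ℂ) : ℂ :=
  ∫ ω, a 0 0 ω * (starRingEnd ℂ) (a 0 0 ω) ∂P

def myVM {Ω : Type*} [MeasurableSpace Ω] (P : Measure Ω) (a : ℕ → ℕ → Ω → ℂ) (M : ℝ)
    (k : ℕ) : ℂ :=
  myAl P a M ^ k - myGa P a M ^ k - myGa' P a M ^ k + myDe P a ^ k

lemma myPhi_meas (M : ℝ) : Measurable (myPhi M) := by
  unfold myPhi
  exact Measurable.ite (measurableSet_lt measurable_norm measurable_const)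
    measurable_id measurable_const

lemma myPhi_le_norm (M : ℝ) (z : ℂ) : ‖myPhi M z‖ ≤ ‖z‖ := by
  unfold myPhi
  split_ifs
  · exact le_rfl
  · simp

lemma myPhi_le_M (M : ℝ) (z : ℂ) : ‖myPhi M z‖ ≤ |M| := by
  unfold myPhi
  split_ifs with h
  · exact le_trans h.le (le_abs_self M)
  · simpa using abs_nonneg M

section Moments
variable {Ω : Type*} [MeasurableSpace Ω] (P : Measure Ω) [IsProbabilityMeasure P]
  (a : ℕ → ℕ → Ω → ℂ)

lemma myPhi_memL2 (hmeas : ∀ i j, Measurable (a i j)) (M : ℝ) (i j : ℕ) :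
    MemLp (fun ω => myPhi M (a i j ω)) 2 P :=
  (memLp_top_of_bound ((myPhi_meas M).comp (hmeas i j)).aestronglyMeasurable |M|
    (Eventually.of_forall fun ω => myPhi_le_M M _)).mono_exponent le_top

lemma myTf_meas (M : ℝ) : Measurable (myTf P a M) :=
  (myPhi_meas M).sub measurable_const

lemma myTf_memL2 (hmeas : ∀ i j, Measurable (a i j)) (M : ℝ) :
    MemLp (fun ω => myTf P a M (a 0 0 ω)) 2 P := by
  unfold myTf
  exact (myPhi_memL2 P a hmeas M 0 0).sub (memLp_const _)

lemma myTf_mean (hmeas : ∀ i j, Measurable (a i j)) (M : ℝ) :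
    ∫ ω, myTf P a M (a 0 0 ω) ∂P = 0 := by
  unfold myTf
  rw [integral_sub ((myPhi_memL2 P a hmeas M 0 0).integrable one_le_two)
    (integrable_const _), integral_const, probReal_univ, one_smul]
  exact sub_self _

lemma myTrunc_eq (hmeas : ∀ i j, Measurable (a i j))
    (hident : ∀ i j, IdentDistrib (a i j) (a 0 0) P P) (M : ℝ) (i j : ℕ) (ω : Ω) :
    trunc P a M i j ω = myTf P a M (a i j ω) := by
  have hint : (∫ ω', (if ‖a i j ω'‖ < M then a i j ω' else 0) ∂P) = myC P a M := by
    have := ((hident i j).comp (myPhi_meas M)).integral_eq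
    simpa [Function.comp, myPhi, myC] using this
  unfold trunc myTf myPhi
  rw [hint]

end Moments



section Key
variable {Ω : Type*} [MeasurableSpace Ω] (P : Measure Ω) [IsProbabilityMeasure P]
  (a : ℕ → ℕ → Ω → ℂ)

lemma myE0_card (k : ℕ) :
    (Finset.image (fun j : Fin k => ((0 : ℕ), (j : ℕ))) Finset.univ).card = k := by
  rw [Finset.card_image_of_injective _ (fun i j h => Fin.val_injective (congrArg Prod.snd h)),
    Finset.card_univ, Fintype.card_fin]

lemma myKey (hmeas : ∀ i j, Measurable (a i j))
    (hindep : iIndepFun (fun p : ℕ × ℕ => a p.1 p.2) P)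
    (hident : ∀ i j, IdentDistrib (a i j) (a 0 0) P P)
    (hL2 : MemLp (a 0 0) 2 P)
    (hmean : ∫ ω, a 0 0 ω ∂P = 0) (M : ℝ) (k : ℕ) :
    ((∫ ω, ‖(∏ j : Fin k, trunc P a M 0 j.1 ω) - ∏ j : Fin k, a 0 j.1 ω‖ ^ 2 ∂P : ℝ) : ℂ)
      = myVM P a M k := by
  classical
  set E₀ : Finset (ℕ × ℕ) := Finset.image (fun j : Fin k => ((0 : ℕ), (j : ℕ))) Finset.univ
    with hE₀def
  have hE₀ : E₀.card = k := myE0_card k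
  have hinj : ∀ x ∈ (Finset.univ : Finset (Fin k)), ∀ y ∈ Finset.univ,
      (fun j : Fin k => ((0 : ℕ), (j : ℕ))) x = (fun j : Fin k => ((0 : ℕ), (j : ℕ))) y → x = y :=
    fun x _ y _ h => Fin.val_injective (congrArg Prod.snd h)
  have hpt : ∀ ω, (∏ j : Fin k, trunc P a M 0 j.1 ω) - ∏ j : Fin k, a 0 j.1 ω
      = (∏ e ∈ E₀, myTf P a M (a e.1 e.2 ω)) - ∏ e ∈ E₀, a e.1 e.2 ω := by
    intro ω
    congr 1
    · rw [hE₀def, Finset.prod_image hinj]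
      exact Finset.prod_congr rfl fun j _ => myTrunc_eq P a hmeas hident M 0 j.1 ω
    · rw [hE₀def, Finset.prod_image hinj]
  have hDD := myDD hmeas hindep hident hL2 hmean (myTf P a M) (myTf_meas P a M)
    (myTf_memL2 P a hmeas M) (myTf_mean P a hmeas M) E₀ E₀ hE₀ hE₀
  have hofr : (∫ ω, ((‖(∏ j : Fin k, trunc P a M 0 j.1 ω) - ∏ j : Fin k, a 0 j.1 ω‖ ^ 2 : ℝ) : ℂ) ∂P)
      = ((∫ ω, ‖(∏ j : Fin k, trunc P a M 0 j.1 ω) - ∏ j : Fin k, a 0 j.1 ω‖ ^ 2 ∂P : ℝ) : ℂ) :=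
    integral_ofReal
  rw [← hofr]
  have hpt2 : ∀ ω, ((‖(∏ j : Fin k, trunc P a M 0 j.1 ω) - ∏ j : Fin k, a 0 j.1 ω‖ ^ 2 : ℝ) : ℂ)
      = ((∏ e ∈ E₀, myTf P a M (a e.1 e.2 ω)) - ∏ e ∈ E₀, a e.1 e.2 ω) *
        (starRingEnd ℂ) ((∏ e ∈ E₀, myTf P a M (a e.1 e.2 ω)) - ∏ e ∈ E₀, a e.1 e.2 ω) := by
    intro ω
    rw [hpt ω, Complex.mul_conj]
    norm_cast
    simp [Complex.normSq_eq_norm_sq]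
  rw [integral_congr_ae (Eventually.of_forall hpt2), hDD.2, if_pos rfl]
  rfl

lemma myOrth (hmeas : ∀ i j, Measurable (a i j))
    (hindep : iIndepFun (fun p : ℕ × ℕ => a p.1 p.2) P)
    (hident : ∀ i j, IdentDistrib (a i j) (a 0 0) P P)
    (hL2 : MemLp (a 0 0) 2 P)
    (hmean : ∫ ω, a 0 0 ω ∂P = 0) (M : ℝ) (k n : ℕ) :
    ((∫ ω, ‖Pcoef (trunc P a M) n k ω - Pcoef a n k ω‖ ^ 2 ∂P : ℝ) : ℂ)
      = (((myT n k).card : ℝ) : ℂ) * ((((n : ℝ)⁻¹ ^ k : ℝ)) : ℂ) * myVM P a M k := by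
  classical
  set g : (Σ I : Finset (Fin n), Equiv.Perm ↥I) → ℂ :=
    fun p => ((Real.sqrt n)⁻¹ : ℂ) ^ k * ((Equiv.Perm.sign p.2 : ℤ) : ℂ) with hgdef
  set D : Finset (ℕ × ℕ) → Ω → ℂ :=
    fun E ω => (∏ e ∈ E, myTf P a M (a e.1 e.2 ω)) - ∏ e ∈ E, a e.1 e.2 ω with hDdef
  have hdiff : ∀ ω, Pcoef (trunc P a M) n k ω - Pcoef a n k ω
      = ∑ p ∈ myT n k, g p * D (myEd p) ω := by
    intro ω
    rw [myPcoefExpand (trunc P a M) n k ω, myPcoefExpand a n k ω, ← Finset.sum_sub_distrib]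
    refine Finset.sum_congr rfl fun p _ => ?_
    have htr : (∏ e ∈ myEd p, trunc P a M e.1 e.2 ω)
        = ∏ e ∈ myEd p, myTf P a M (a e.1 e.2 ω) :=
      Finset.prod_congr rfl fun e _ => myTrunc_eq P a hmeas hident M e.1 e.2 ω
    rw [htr, hgdef, hDdef]
    simp only []
    rw [mul_sub]
  have hcard : ∀ p ∈ myT n k, (myEd p).card = k := fun p hp => by
    rw [myEd_card, myT_mem_card hp]
  have hDD : ∀ p ∈ myT n k, ∀ q ∈ myT n k,
      Integrable (fun ω => D (myEd p) ω * (starRingEnd ℂ) (D (myEd q) ω)) P ∧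
      (∫ ω, D (myEd p) ω * (starRingEnd ℂ) (D (myEd q) ω) ∂P)
        = if p = q then myVM P a M k else 0 := by
    intro p hp q hq
    have h := myDD hmeas hindep hident hL2 hmean (myTf P a M) (myTf_meas P a M)
      (myTf_memL2 P a hmeas M) (myTf_mean P a hmeas M) (myEd p) (myEd q)
      (hcard p hp) (hcard q hq)
    refine ⟨h.1, ?_⟩
    rw [h.2]
    by_cases hpq : p = q
    · subst hpq
      rw [if_pos rfl, if_pos rfl]
      rfl
    · rw [if_neg (fun hEd => hpq (myEd_inj hEd)), if_neg hpq]
  have hpt : ∀ ω, ((‖Pcoef (trunc P a M) n k ω - Pcoef a n k ω‖ ^ 2 : ℝ) : ℂ)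
      = ∑ p ∈ myT n k, ∑ q ∈ myT n k, (g p * (starRingEnd ℂ) (g q)) *
          (D (myEd p) ω * (starRingEnd ℂ) (D (myEd q) ω)) := by
    intro ω
    have h1 : ((‖Pcoef (trunc P a M) n k ω - Pcoef a n k ω‖ ^ 2 : ℝ) : ℂ)
        = (Pcoef (trunc P a M) n k ω - Pcoef a n k ω) *
          (starRingEnd ℂ) (Pcoef (trunc P a M) n k ω - Pcoef a n k ω) := by
      rw [Complex.mul_conj]
      norm_cast
      simp [Complex.normSq_eq_norm_sq]
    rw [h1, hdiff ω, map_sum, Finset.sum_mul_sum]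
    refine Finset.sum_congr rfl fun p _ => Finset.sum_congr rfl fun q _ => ?_
    rw [map_mul]
    ring
  have hofr : (∫ ω, ((‖Pcoef (trunc P a M) n k ω - Pcoef a n k ω‖ ^ 2 : ℝ) : ℂ) ∂P)
      = ((∫ ω, ‖Pcoef (trunc P a M) n k ω - Pcoef a n k ω‖ ^ 2 ∂P : ℝ) : ℂ) :=
    integral_ofReal
  rw [← hofr, integral_congr_ae (Eventually.of_forall hpt),
    integral_finset_sum (myT n k) (fun p hp => integrable_finset_sum (myT n k) (fun q hq =>
      ((hDD p hp q hq).1.const_mul _)))]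
  have hsum1 : ∀ p ∈ myT n k,
      (∫ ω, ∑ q ∈ myT n k, (g p * (starRingEnd ℂ) (g q)) *
        (D (myEd p) ω * (starRingEnd ℂ) (D (myEd q) ω)) ∂P)
      = (g p * (starRingEnd ℂ) (g p)) * myVM P a M k := by
    intro p hp
    rw [integral_finset_sum (myT n k) (fun q hq => ((hDD p hp q hq).1.const_mul _))]
    have h2 : ∀ q ∈ myT n k,
        (∫ ω, (g p * (starRingEnd ℂ) (g q)) *
          (D (myEd p) ω * (starRingEnd ℂ) (D (myEd q) ω)) ∂P)
        = if p = q then (g p * (starRingEnd ℂ) (g q)) * myVM P a M k else 0 := by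
      intro q hq
      rw [integral_const_mul, (hDD p hp q hq).2, mul_ite, mul_zero]
    rw [Finset.sum_congr rfl h2, Finset.sum_ite_eq (myT n k) p
      (fun q => (g p * (starRingEnd ℂ) (g q)) * myVM P a M k), if_pos hp]
  rw [Finset.sum_congr rfl hsum1]
  have hgg : ∀ p : (Σ I : Finset (Fin n), Equiv.Perm ↥I),
      g p * (starRingEnd ℂ) (g p) = ((((n : ℝ)⁻¹ ^ k : ℝ)) : ℂ) := by
    intro p
    have hr : ((Real.sqrt n)⁻¹ ^ k : ℝ) * ((Real.sqrt n)⁻¹) ^ k = ((n : ℝ)⁻¹) ^ k := by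
      rw [← mul_pow, ← mul_inv, Real.mul_self_sqrt (by positivity : (0:ℝ) ≤ (n : ℝ))]
    have hs : ((Equiv.Perm.sign p.2 : ℤ) : ℂ) * ((Equiv.Perm.sign p.2 : ℤ) : ℂ) = 1 := by
      have h1 : (Equiv.Perm.sign p.2 : ℤ) * (Equiv.Perm.sign p.2 : ℤ) = 1 := by
        rw [← Units.val_mul, Int.units_mul_self, Units.val_one]
      rw [← Int.cast_mul, h1, Int.cast_one]
    rw [hgdef]
    simp only [map_mul, map_pow, map_inv₀, Complex.conj_ofReal, map_intCast]
    calc (((Real.sqrt n)⁻¹ : ℂ) ^ k * ((Equiv.Perm.sign p.2 : ℤ) : ℂ)) *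
          (((Real.sqrt n)⁻¹ : ℂ) ^ k * ((Equiv.Perm.sign p.2 : ℤ) : ℂ))
        = (((Real.sqrt n)⁻¹ : ℂ) ^ k * ((Real.sqrt n)⁻¹ : ℂ) ^ k) *
          (((Equiv.Perm.sign p.2 : ℤ) : ℂ) * ((Equiv.Perm.sign p.2 : ℤ) : ℂ)) := by ring
      _ = ((Real.sqrt n)⁻¹ : ℂ) ^ k * ((Real.sqrt n)⁻¹ : ℂ) ^ k := by rw [hs, mul_one]
      _ = ((((n : ℝ)⁻¹ ^ k : ℝ)) : ℂ) := by
          rw [← Complex.ofReal_inv, ← Complex.ofReal_pow, ← Complex.ofReal_mul, hr]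
  rw [Finset.sum_congr rfl (fun p _ => by rw [hgg p])]
  rw [Finset.sum_const, nsmul_eq_mul]
  push_cast
  ring

lemma myPart1 (hmeas : ∀ i j, Measurable (a i j))
    (hindep : iIndepFun (fun p : ℕ × ℕ => a p.1 p.2) P)
    (hident : ∀ i j, IdentDistrib (a i j) (a 0 0) P P)
    (hL2 : MemLp (a 0 0) 2 P)
    (hmean : ∫ ω, a 0 0 ω ∂P = 0) (k n : ℕ) (hn : k ≤ n) (hk : 1 ≤ k) (M : ℝ) :
    ∫ ω, ‖Pcoef (trunc P a M) n k ω - Pcoef a n k ω‖ ^ 2 ∂P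
      ≤ ∫ ω, ‖(∏ j : Fin k, trunc P a M 0 j.1 ω) - ∏ j : Fin k, a 0 j.1 ω‖ ^ 2 ∂P := by
  have hO := myOrth P a hmeas hindep hident hL2 hmean M k n
  have hK := myKey P a hmeas hindep hident hL2 hmean M k
  have hn1 : (1 : ℕ) ≤ n := le_trans hk hn
  have hpow : (0 : ℝ) < (n : ℝ) ^ k := by positivity
  have hEq : (∫ ω, ‖Pcoef (trunc P a M) n k ω - Pcoef a n k ω‖ ^ 2 ∂P)
      = (((myT n k).card : ℝ) * ((n : ℝ)⁻¹ ^ k)) *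
        ∫ ω, ‖(∏ j : Fin k, trunc P a M 0 j.1 ω) - ∏ j : Fin k, a 0 j.1 ω‖ ^ 2 ∂P := by
    apply Complex.ofReal_injective
    rw [hO, Complex.ofReal_mul, Complex.ofReal_mul, hK]
    try push_cast
    try ring
  have hcoeff : ((myT n k).card : ℝ) * ((n : ℝ)⁻¹ ^ k) ≤ 1 := by
    have hnat : (myT n k).card ≤ n ^ k := by
      rw [myT_card, mul_comm, ← Nat.descFactorial_eq_factorial_mul_choose]
      exact Nat.descFactorial_le_pow n k
    rw [inv_pow, ← div_eq_mul_inv, div_le_one hpow]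
    exact_mod_cast hnat
  have hRnn : 0 ≤ ∫ ω, ‖(∏ j : Fin k, trunc P a M 0 j.1 ω) - ∏ j : Fin k, a 0 j.1 ω‖ ^ 2 ∂P :=
    integral_nonneg fun ω => sq_nonneg _
  have hcnn : 0 ≤ ((myT n k).card : ℝ) * ((n : ℝ)⁻¹ ^ k) := by positivity
  rw [hEq]
  exact mul_le_of_le_one_left hRnn hcoeff

lemma myPart2 (hmeas : ∀ i j, Measurable (a i j))
    (hindep : iIndepFun (fun p : ℕ × ℕ => a p.1 p.2) P)
    (hident : ∀ i j, IdentDistrib (a i j) (a 0 0) P P)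
    (hL2 : MemLp (a 0 0) 2 P)
    (hmean : ∫ ω, a 0 0 ω ∂P = 0)
    (hvar : ∫ ω, ‖a 0 0 ω‖ ^ 2 ∂P = 1) (k : ℕ) :
    Tendsto
      (fun M : ℝ =>
        ∫ ω, ‖(∏ j : Fin k, trunc P a M 0 j.1 ω) - ∏ j : Fin k, a 0 j.1 ω‖ ^ 2 ∂P)
      atTop (nhds 0) := by
  classical
  have hK : ∀ M : ℝ,
      (∫ ω, ‖(∏ j : Fin k, trunc P a M 0 j.1 ω) - ∏ j : Fin k, a 0 j.1 ω‖ ^ 2 ∂P)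
        = (myVM P a M k).re := by
    intro M
    rw [← myKey P a hmeas hindep hident hL2 hmean M k, Complex.ofReal_re]
  have haint : Integrable (a 0 0) P := hL2.integrable one_le_two
  have ha2int : Integrable (fun ω => ‖a 0 0 ω‖ ^ 2) P :=
    (memLp_two_iff_integrable_sq_norm hL2.1).mp hL2
  have hφmeasAE : ∀ M : ℝ, AEStronglyMeasurable (fun ω => myPhi M (a 0 0 ω)) P :=
    fun M => ((myPhi_meas M).comp (hmeas 0 0)).aestronglyMeasurable
  have hφptlim : ∀ ω : Ω, ∀ᶠ M in (atTop : Filter ℝ), myPhi M (a 0 0 ω) = a 0 0 ω := by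
    intro ω
    refine eventually_atTop.2 ⟨‖a 0 0 ω‖ + 1, fun M hM => ?_⟩
    unfold myPhi
    exact if_pos (by linarith)
  -- convergence of the truncation constant
  have hc : Tendsto (fun M : ℝ => myC P a M) atTop (𝓝 0) := by
    have h := tendsto_integral_filter_of_dominated_convergence (μ := P)
      (F := fun M : ℝ => fun ω => myPhi M (a 0 0 ω)) (f := a 0 0)
      (bound := fun ω => ‖a 0 0 ω‖)
      (Eventually.of_forall hφmeasAE)
      (Eventually.of_forall fun M => Eventually.of_forall fun ω => myPhi_le_norm M _)
      haint.norm
      (Eventually.of_forall fun ω =>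
        Tendsto.congr' ((hφptlim ω).mono fun M h => h.symm) tendsto_const_nhds)
    rw [hmean] at h
    exact h
  have hcconj : Tendsto (fun M : ℝ => (starRingEnd ℂ) (myC P a M)) atTop (𝓝 0) := by
    have := (Complex.continuous_conj.tendsto (0 : ℂ)).comp hc
    simpa [Function.comp_def] using this
  -- dominated convergence for the three mixed second moments
  have hαφ : Tendsto (fun M : ℝ => ∫ ω, myPhi M (a 0 0 ω) *
      (starRingEnd ℂ) (myPhi M (a 0 0 ω)) ∂P) atTop (𝓝 (myDe P a)) := by
    refine tendsto_integral_filter_of_dominated_convergence (μ := P)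
      (f := fun ω => a 0 0 ω * (starRingEnd ℂ) (a 0 0 ω))
      (bound := fun ω => ‖a 0 0 ω‖ ^ 2)
      (Eventually.of_forall fun M => ((hφmeasAE M).mul (Complex.continuous_conj.comp_aestronglyMeasurable (hφmeasAE M))))
      (Eventually.of_forall fun M => Eventually.of_forall fun ω => ?_)
      ha2int
      (Eventually.of_forall fun ω => ?_)
    · rw [norm_mul, RCLike.norm_conj, pow_two]
      exact mul_le_mul (myPhi_le_norm M _) (myPhi_le_norm M _) (norm_nonneg _) (norm_nonneg _)
    · refine Tendsto.congr' (((hφptlim ω).mono fun M h => ?_)) tendsto_const_nhds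
      dsimp only
      rw [h]
  have hγ1 : Tendsto (fun M : ℝ => ∫ ω, myPhi M (a 0 0 ω) *
      (starRingEnd ℂ) (a 0 0 ω) ∂P) atTop (𝓝 (myDe P a)) := by
    refine tendsto_integral_filter_of_dominated_convergence (μ := P)
      (f := fun ω => a 0 0 ω * (starRingEnd ℂ) (a 0 0 ω))
      (bound := fun ω => ‖a 0 0 ω‖ ^ 2)
      (Eventually.of_forall fun M => ((hφmeasAE M).mul (Complex.continuous_conj.comp_aestronglyMeasurable (hmeas 0 0).aestronglyMeasurable)))
      (Eventually.of_forall fun M => Eventually.of_forall fun ω => ?_)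
      ha2int
      (Eventually.of_forall fun ω => ?_)
    · rw [norm_mul, RCLike.norm_conj, pow_two]
      exact mul_le_mul_of_nonneg_right (myPhi_le_norm M _) (norm_nonneg _)
    · refine Tendsto.congr' (((hφptlim ω).mono fun M h => ?_)) tendsto_const_nhds
      dsimp only
      rw [h]
  have hγ2 : Tendsto (fun M : ℝ => ∫ ω, a 0 0 ω *
      (starRingEnd ℂ) (myPhi M (a 0 0 ω)) ∂P) atTop (𝓝 (myDe P a)) := by
    refine tendsto_integral_filter_of_dominated_convergence (μ := P)
      (f := fun ω => a 0 0 ω * (starRingEnd ℂ) (a 0 0 ω))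
      (bound := fun ω => ‖a 0 0 ω‖ ^ 2)
      (Eventually.of_forall fun M => ((hmeas 0 0).aestronglyMeasurable.mul (Complex.continuous_conj.comp_aestronglyMeasurable (hφmeasAE M))))
      (Eventually.of_forall fun M => Eventually.of_forall fun ω => ?_)
      ha2int
      (Eventually.of_forall fun ω => ?_)
    · rw [norm_mul, RCLike.norm_conj, pow_two]
      exact mul_le_mul_of_nonneg_left (myPhi_le_norm M _) (norm_nonneg _)
    · refine Tendsto.congr' (((hφptlim ω).mono fun M h => ?_)) tendsto_const_nhds
      dsimp only
      rw [h]
  -- algebraic identities for the moments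
  have hCint : ∀ M : ℝ, (∫ ω, myPhi M (a 0 0 ω) ∂P) = myC P a M := fun M => rfl
  have hαeq : ∀ M : ℝ, myAl P a M
      = (∫ ω, myPhi M (a 0 0 ω) * (starRingEnd ℂ) (myPhi M (a 0 0 ω)) ∂P)
        - myC P a M * (starRingEnd ℂ) (myC P a M) := by
    intro M
    have hIA : Integrable (fun ω => myPhi M (a 0 0 ω) *
        (starRingEnd ℂ) (myPhi M (a 0 0 ω))) P :=
      myL2mul (myPhi_memL2 P a hmeas M 0 0) (myconjL2 (myPhi_memL2 P a hmeas M 0 0))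
    have hIB : Integrable (fun ω => myPhi M (a 0 0 ω) *
        (starRingEnd ℂ) (myC P a M)) P :=
      ((myPhi_memL2 P a hmeas M 0 0).integrable one_le_two).mul_const _
    have hIC : Integrable (fun ω => myC P a M *
        (starRingEnd ℂ) (myPhi M (a 0 0 ω))) P :=
      ((myconjL2 (myPhi_memL2 P a hmeas M 0 0)).integrable one_le_two).const_mul _
    have hID : Integrable (fun ω => myC P a M * (starRingEnd ℂ) (myC P a M)) P :=
      integrable_const _
    have hpt : ∀ ω, myTf P a M (a 0 0 ω) * (starRingEnd ℂ) (myTf P a M (a 0 0 ω))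
        = (myPhi M (a 0 0 ω) * (starRingEnd ℂ) (myPhi M (a 0 0 ω))
            - myPhi M (a 0 0 ω) * (starRingEnd ℂ) (myC P a M)
            - myC P a M * (starRingEnd ℂ) (myPhi M (a 0 0 ω)))
          + myC P a M * (starRingEnd ℂ) (myC P a M) := by
      intro ω
      unfold myTf
      rw [map_sub]
      ring
    unfold myAl
    rw [integral_congr_ae (Eventually.of_forall hpt)]
    have e1 := integral_add ((hIA.sub hIB).sub hIC) hID
    have e2 := integral_sub (hIA.sub hIB) hIC
    have e3 := integral_sub hIA hIB
    simp only [Pi.sub_apply] at e1 e2 e3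
    rw [e1, e2, e3, integral_mul_const, integral_const_mul, integral_conj, hCint M,
      integral_const, probReal_univ, one_smul]
    ring
  have hγeq : ∀ M : ℝ, myGa P a M
      = ∫ ω, myPhi M (a 0 0 ω) * (starRingEnd ℂ) (a 0 0 ω) ∂P := by
    intro M
    have hIA : Integrable (fun ω => myPhi M (a 0 0 ω) * (starRingEnd ℂ) (a 0 0 ω)) P :=
      myL2mul (myPhi_memL2 P a hmeas M 0 0) (myconjL2 hL2)
    have hIB : Integrable (fun ω => myC P a M * (starRingEnd ℂ) (a 0 0 ω)) P :=
      ((myconjL2 hL2).integrable one_le_two).const_mul _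
    have hpt : ∀ ω, myTf P a M (a 0 0 ω) * (starRingEnd ℂ) (a 0 0 ω)
        = myPhi M (a 0 0 ω) * (starRingEnd ℂ) (a 0 0 ω)
          - myC P a M * (starRingEnd ℂ) (a 0 0 ω) := by
      intro ω
      unfold myTf
      ring
    unfold myGa
    rw [integral_congr_ae (Eventually.of_forall hpt)]
    have e1 := integral_sub hIA hIB
    rw [e1, integral_const_mul, integral_conj, hmean, map_zero, mul_zero, sub_zero]
  have hγ'eq : ∀ M : ℝ, myGa' P a M
      = ∫ ω, a 0 0 ω * (starRingEnd ℂ) (myPhi M (a 0 0 ω)) ∂P := by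
    intro M
    have hIA : Integrable (fun ω => a 0 0 ω * (starRingEnd ℂ) (myPhi M (a 0 0 ω))) P :=
      myL2mul hL2 (myconjL2 (myPhi_memL2 P a hmeas M 0 0))
    have hIB : Integrable (fun ω => a 0 0 ω * (starRingEnd ℂ) (myC P a M)) P :=
      haint.mul_const _
    have hpt : ∀ ω, a 0 0 ω * (starRingEnd ℂ) (myTf P a M (a 0 0 ω))
        = a 0 0 ω * (starRingEnd ℂ) (myPhi M (a 0 0 ω))
          - a 0 0 ω * (starRingEnd ℂ) (myC P a M) := by
      intro ω
      unfold myTf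
      rw [map_sub]
      ring
    unfold myGa'
    rw [integral_congr_ae (Eventually.of_forall hpt)]
    have e1 := integral_sub hIA hIB
    rw [e1, integral_mul_const, hmean, zero_mul, sub_zero]
  -- limits of the moments
  have hα : Tendsto (fun M : ℝ => myAl P a M) atTop (𝓝 (myDe P a)) := by
    have h := hαφ.sub (hc.mul hcconj)
    simp only [mul_zero, sub_zero] at h
    exact Tendsto.congr (fun M => (hαeq M).symm) h
  have hγ : Tendsto (fun M : ℝ => myGa P a M) atTop (𝓝 (myDe P a)) :=
    Tendsto.congr (fun M => (hγeq M).symm) hγ1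
  have hγ' : Tendsto (fun M : ℝ => myGa' P a M) atTop (𝓝 (myDe P a)) :=
    Tendsto.congr (fun M => (hγ'eq M).symm) hγ2
  have hδ : myDe P a = 1 := by
    unfold myDe
    have hpt : ∀ ω, a 0 0 ω * (starRingEnd ℂ) (a 0 0 ω) = ((‖a 0 0 ω‖ ^ 2 : ℝ) : ℂ) := by
      intro ω
      rw [Complex.mul_conj]
      norm_cast
      simp [Complex.normSq_eq_norm_sq]
    rw [integral_congr_ae (Eventually.of_forall hpt)]
    have : (∫ ω, ((‖a 0 0 ω‖ ^ 2 : ℝ) : ℂ) ∂P) = ((∫ ω, ‖a 0 0 ω‖ ^ 2 ∂P : ℝ) : ℂ) :=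
      integral_ofReal
    rw [this, hvar, Complex.ofReal_one]
  have hVM : Tendsto (fun M : ℝ => myVM P a M k) atTop (𝓝 0) := by
    have h := (((hα.pow k).sub (hγ.pow k)).sub (hγ'.pow k)).add
      (tendsto_const_nhds (x := myDe P a ^ k) (f := atTop))
    have hval : (myDe P a ^ k - myDe P a ^ k - myDe P a ^ k) + myDe P a ^ k = 0 := by ring
    rw [hval] at h
    exact Tendsto.congr (fun M => rfl) h
  have hre := (Complex.continuous_re.tendsto (0 : ℂ)).comp hVM
  simp only [Complex.zero_re] at hre
  exact Tendsto.congr (fun M => (hK M).symm) hre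

end Key


/-- **L² bound for the truncation error** (proof of Lemma 3.3): for every `k ≥ 1`, `n ≥ k`
and `M ≥ 1`, `E[|P_k^{(n,M)} - P_k^{(n)}|²] ≤ E[|a₁₁^{(M)} ⋯ a₁ₖ^{(M)} - a₁₁ ⋯ a₁ₖ|²]`, and
this bound tends to `0` as `M → ∞`. -/
theorem Pcoef_truncation_L2_bound
    {Ω : Type*} [MeasurableSpace Ω] (P : Measure Ω) [IsProbabilityMeasure P]
    (a : ℕ → ℕ → Ω → ℂ)
    (hmeas : ∀ i j, Measurable (a i j))
    (hindep : iIndepFun (fun p : ℕ × ℕ => a p.1 p.2) P)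
    (hident : ∀ i j, IdentDistrib (a i j) (a 0 0) P P)
    (hL2 : MemLp (a 0 0) 2 P)
    (hmean : ∫ ω, a 0 0 ω ∂P = 0)
    (hvar : ∫ ω, ‖a 0 0 ω‖ ^ 2 ∂P = 1)
    (k : ℕ) (hk : 1 ≤ k) :
    (∀ n : ℕ, k ≤ n → ∀ M : ℝ, 1 ≤ M →
      ∫ ω, ‖Pcoef (trunc P a M) n k ω - Pcoef a n k ω‖ ^ 2 ∂P
        ≤ ∫ ω, ‖(∏ j : Fin k, trunc P a M 0 j.1 ω) - ∏ j : Fin k, a 0 j.1 ω‖ ^ 2 ∂P) ∧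
    Tendsto
      (fun M : ℝ =>
        ∫ ω, ‖(∏ j : Fin k, trunc P a M 0 j.1 ω) - ∏ j : Fin k, a 0 j.1 ω‖ ^ 2 ∂P)
      atTop (nhds 0) := by
  exact ⟨fun n hn M _ => myPart1 P a hmeas hindep hident hL2 hmean k n hn hk M,
    myPart2 P a hmeas hindep hident hL2 hmean hvar k⟩

end
end
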